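/- arXiv:2204.08420 — 6 statements merged into one kernel-verified Lean document; each statement's English description precedes it below -/
import Mathlib

section
/- Let q ∈ (0,1) and ζ > 0. Let χ be a q-geometric random variable with parameter q, i.e. P(χ = k) = q^k (q;q)_∞ / (q;q)_k for k ∈ ℤ_{≥0}, and let S be an independent theta-distributed random variable, i.e. P(S = k) = q^{k²/2} ζ^k / ϑ₃(ζ;q) for k ∈ ℤ. Then for every n ∈ ℤ, P(χ + S ≤ n) = 1/(-ζ q^{1/2+n}; q)_∞. -/
open MeasureTheory

noncomputable section

/-- finite q-Pochhammer symbol `(z;q)_n = ∏_{i=0}^{n-1} (1 - z qⁱ)` -/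
def qPochFin (z q : ℝ) (n : ℕ) : ℝ := ∏ i ∈ Finset.range n, (1 - z * q ^ i)

/-- infinite q-Pochhammer symbol `(z;q)_∞ = ∏_{i≥0} (1 - z qⁱ)` -/
def qPochInf (z q : ℝ) : ℝ := ∏' i : ℕ, (1 - z * q ^ i)

/-- Jacobi theta function `ϑ₃(ζ;q) = Σ_{k∈ℤ} q^{k²/2} ζ^k` -/
def theta3 (ζ q : ℝ) : ℝ := ∑' k : ℤ, q ^ (((k : ℝ) ^ 2) / 2) * ζ ^ k

section Aux

open Real Filter Topology

variable {q z : ℝ}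

lemma chord_bound {z : ℝ} (hz0 : 0 ≤ z) (hz1 : z < 1) {t : ℝ} (ht0 : 0 ≤ t) (ht1 : t ≤ 1) :
    Real.exp (t * Real.log (1 - z)) ≤ 1 - t * z := by
  have h1z : (0:ℝ) < 1 - z := by linarith
  have := convexOn_exp.2 (Set.mem_univ 0) (Set.mem_univ (Real.log (1 - z)))
    (by linarith : (0:ℝ) ≤ 1 - t) ht0 (by ring)
  have h2 : Real.exp ((1 - t) * 0 + t * Real.log (1 - z)) ≤ (1 - t) * 1 + t * (1 - z) := by
    simpa [smul_eq_mul, Real.exp_zero, Real.exp_log h1z] using this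
  have e1 : (1 - t) * 0 + t * Real.log (1 - z) = t * Real.log (1 - z) := by ring
  rw [e1] at h2
  nlinarith

lemma factor_pos (hq0 : 0 < q) (hq1 : q < 1) (hz : z < 1) (i : ℕ) :
    0 < 1 - z * q ^ i := by
  rcases le_or_gt z 0 with h | h
  · nlinarith [pow_pos hq0 i, pow_le_one₀ hq0.le hq1.le (n := i)]
  · nlinarith [pow_pos hq0 i, pow_le_one₀ hq0.le hq1.le (n := i)]

lemma log_factor_abs_le (hq0 : 0 < q) (hq1 : q < 1) (hz : z < 1) (i : ℕ) :
    |Real.log (1 - z * q ^ i)| ≤ (|Real.log (1 - z)| + |z|) * q ^ i := by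
  have hqi0 : 0 < q ^ i := pow_pos hq0 i
  have hqi1 : q ^ i ≤ 1 := pow_le_one₀ hq0.le hq1.le
  have hfp := factor_pos hq0 hq1 hz i
  rcases le_or_gt z 0 with h | h
  · -- factor ≥ 1, log ∈ [0, -z*q^i]
    have h1 : 0 ≤ -z * q ^ i := by nlinarith
    have hge : (1:ℝ) ≤ 1 - z * q ^ i := by nlinarith
    have hlog0 : 0 ≤ Real.log (1 - z * q ^ i) := Real.log_nonneg hge
    have hub : Real.log (1 - z * q ^ i) ≤ -z * q ^ i := by
      have := Real.log_le_sub_one_of_pos hfp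
      linarith
    rw [abs_of_nonneg hlog0]
    have : -z ≤ |z| := neg_le_abs z
    nlinarith [abs_nonneg (Real.log (1 - z))]
  · -- 0 < z < 1
    have hchord := chord_bound h.le hz hqi0.le hqi1
    have hlow : q ^ i * Real.log (1 - z) ≤ Real.log (1 - z * q ^ i) := by
      have h1 : Real.exp (q ^ i * Real.log (1 - z)) ≤ 1 - z * q ^ i := by
        have := hchord; nlinarith
      calc q ^ i * Real.log (1 - z) = Real.log (Real.exp (q ^ i * Real.log (1 - z))) :=
            (Real.log_exp _).symm
        _ ≤ Real.log (1 - z * q ^ i) := Real.log_le_log (Real.exp_pos _) h1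
    have hlog0 : Real.log (1 - z * q ^ i) ≤ 0 := by
      apply Real.log_nonpos <;> nlinarith
    rw [abs_of_nonpos hlog0]
    have hl1z : Real.log (1 - z) ≤ 0 := Real.log_nonpos (by linarith) (by linarith)
    have habs : |Real.log (1 - z)| = -Real.log (1 - z) := abs_of_nonpos hl1z
    have h2 : -Real.log (1 - z * q ^ i) ≤ q ^ i * |Real.log (1 - z)| := by
      rw [habs]; nlinarith
    nlinarith [mul_nonneg (abs_nonneg z) hqi0.le]

lemma summable_log_factor (hq0 : 0 < q) (hq1 : q < 1) (hz : z < 1) :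
    Summable (fun i : ℕ => Real.log (1 - z * q ^ i)) := by
  apply Summable.of_abs
  apply Summable.of_nonneg_of_le (fun i => abs_nonneg _) (log_factor_abs_le hq0 hq1 hz)
  exact (summable_geometric_of_lt_one hq0.le hq1).mul_left _

lemma qPochInf_hasProd (hq0 : 0 < q) (hq1 : q < 1) (hz : z < 1) :
    HasProd (fun i : ℕ => 1 - z * q ^ i)
      (Real.exp (∑' i : ℕ, Real.log (1 - z * q ^ i))) := by
  have h := ((summable_log_factor hq0 hq1 hz).hasSum).rexp
  have : (Real.exp ∘ fun i : ℕ => Real.log (1 - z * q ^ i)) = fun i : ℕ => 1 - z * q ^ i := by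
    funext i
    exact Real.exp_log (factor_pos hq0 hq1 hz i)
  rwa [this] at h

lemma qPochInf_eq_exp (hq0 : 0 < q) (hq1 : q < 1) (hz : z < 1) :
    qPochInf z q = Real.exp (∑' i : ℕ, Real.log (1 - z * q ^ i)) :=
  (qPochInf_hasProd hq0 hq1 hz).tprod_eq

lemma qPochInf_multipliable (hq0 : 0 < q) (hq1 : q < 1) (hz : z < 1) :
    Multipliable (fun i : ℕ => 1 - z * q ^ i) :=
  ⟨_, qPochInf_hasProd hq0 hq1 hz⟩

lemma qPochInf_pos (hq0 : 0 < q) (hq1 : q < 1) (hz : z < 1) : 0 < qPochInf z q := by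
  rw [qPochInf_eq_exp hq0 hq1 hz]; exact Real.exp_pos _

lemma qPochFin_pos (hq0 : 0 < q) (hq1 : q < 1) (hz : z < 1) (m : ℕ) : 0 < qPochFin z q m :=
  Finset.prod_pos fun i _ => factor_pos hq0 hq1 hz i

/-- splitting off the first `m` factors -/
lemma qPochInf_split (hq0 : 0 < q) (hq1 : q < 1) (hz : z < 1) (m : ℕ) :
    qPochInf z q = qPochFin z q m * qPochInf (z * q ^ m) q := by
  have hzm : z * q ^ m < 1 := by
    rcases le_or_gt z 0 with h | h
    · nlinarith [pow_pos hq0 m]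
    · nlinarith [pow_pos hq0 m, pow_le_one₀ hq0.le hq1.le (n := m)]
  have hsum := summable_log_factor hq0 hq1 hz
  have hsplit := (Summable.sum_add_tsum_nat_add m hsum).symm
  have e : ∀ i : ℕ, Real.log (1 - z * q ^ (i + m)) = Real.log (1 - z * q ^ m * q ^ i) := by
    intro i
    rw [pow_add, mul_comm (q ^ i), mul_assoc]
  rw [qPochInf_eq_exp hq0 hq1 hz, qPochInf_eq_exp hq0 hq1 hzm, hsplit, Real.exp_add]
  congr 1
  · rw [Real.exp_sum, qPochFin]
    exact Finset.prod_congr rfl fun i _ => Real.exp_log (factor_pos hq0 hq1 hz i)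
  · congr 1
    exact tsum_congr e

lemma qPochInf_le_one_of_nonneg (hq0 : 0 < q) (hq1 : q < 1) (hz0 : 0 ≤ z) (hz : z < 1) :
    qPochInf z q ≤ 1 := by
  rw [qPochInf_eq_exp hq0 hq1 hz]
  rw [Real.exp_le_one_iff]
  apply tsum_nonpos
  intro i
  apply Real.log_nonpos
  · have := factor_pos hq0 hq1 hz i
    linarith
  · nlinarith [pow_pos hq0 i]

/-- `(q;q)_∞ ≤ (q;q)_m` -/
lemma qPochInf_le_qPochFin (hq0 : 0 < q) (hq1 : q < 1) (m : ℕ) :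
    qPochInf q q ≤ qPochFin q q m := by
  have hq1' : q * q ^ m < 1 := by nlinarith [pow_pos hq0 m, pow_le_one₀ hq0.le hq1.le (n := m)]
  have hsplit := qPochInf_split hq0 hq1 hq1 m
  have h1 := qPochInf_le_one_of_nonneg hq0 hq1 (by positivity) hq1'
  have h2 := qPochInf_pos hq0 hq1 hq1' (z := q * q ^ m)
  nlinarith [qPochFin_pos hq0 hq1 hq1 m (z := q)]

lemma ratio_nonneg (hq0 : 0 < q) (hq1 : q < 1) (m : ℕ) :
    0 ≤ qPochInf q q / qPochFin q q m :=
  le_of_lt (div_pos (qPochInf_pos hq0 hq1 hq1) (qPochFin_pos hq0 hq1 hq1 m))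

lemma ratio_le_one (hq0 : 0 < q) (hq1 : q < 1) (m : ℕ) :
    qPochInf q q / qPochFin q q m ≤ 1 :=
  div_le_one_of_le₀ (qPochInf_le_qPochFin hq0 hq1 m) (qPochFin_pos hq0 hq1 hq1 m).le

lemma tendsto_ratio (hq0 : 0 < q) (hq1 : q < 1) :
    Tendsto (fun m : ℕ => qPochInf q q / qPochFin q q m) atTop (𝓝 1) := by
  have h : Tendsto (fun m : ℕ => qPochFin q q m) atTop (𝓝 (qPochInf q q)) := by
    have := (qPochInf_hasProd hq0 hq1 hq1).tendsto_prod_nat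
    simpa [qPochFin, ← qPochInf_eq_exp hq0 hq1 hq1] using this
  have hpos := qPochInf_pos hq0 hq1 hq1 (z := q)
  have := (tendsto_const_nhds (x := qPochInf q q) (f := atTop (α := ℕ))).div h hpos.ne'
  simpa [div_self hpos.ne', Pi.div_def] using this

def sTerm (q ζ : ℝ) (k : ℤ) : ℝ := q ^ (((k : ℝ) ^ 2) / 2) * ζ ^ k
def fTerm (q ζ : ℝ) (n k : ℤ) : ℝ :=
  if k ≤ n then sTerm q ζ k * (qPochInf q q / qPochFin q q (n - k).toNat) else 0
def Gn (q ζ : ℝ) (n : ℤ) : ℝ := qPochInf (-ζ * q ^ ((1 : ℝ) / 2 + (n : ℝ))) q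

variable {q ζ : ℝ}

lemma sTerm_pos (hq0 : 0 < q) (hζ : 0 < ζ) (k : ℤ) : 0 < sTerm q ζ k :=
  mul_pos (Real.rpow_pos_of_pos hq0 _) (zpow_pos hζ _)

lemma summable_nat_aux (hq0 : 0 < q) (hq1 : q < 1) {c : ℝ} (hc : 0 < c) :
    Summable (fun m : ℕ => q ^ (((m : ℝ)) ^ 2 / 2) * c ^ m) := by
  apply summable_of_ratio_norm_eventually_le (r := 1/2) (by norm_num)
  have hlim : Tendsto (fun m : ℕ => q ^ m * c) atTop (𝓝 0) := by
    simpa using (tendsto_pow_atTop_nhds_zero_of_lt_one hq0.le hq1).mul_const c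
  have hev : ∀ᶠ m : ℕ in atTop, q ^ (((2 * m + 1) : ℝ) / 2) * c ≤ 1 / 2 := by
    filter_upwards [hlim.eventually_le_const (by norm_num : (0:ℝ) < 1/2)] with m hm
    have h1 : q ^ (((2 * m + 1) : ℝ) / 2) ≤ q ^ (m : ℕ) := by
      rw [← Real.rpow_natCast q m]
      apply Real.rpow_le_rpow_of_exponent_ge hq0 hq1.le
      push_cast; linarith
    nlinarith [pow_pos hq0 m, Real.rpow_pos_of_pos hq0 (((2 * m + 1) : ℝ) / 2)]
  filter_upwards [hev] with m hm
  have hpos : (0:ℝ) < q ^ (((m : ℝ)) ^ 2 / 2) * c ^ m :=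
    mul_pos (Real.rpow_pos_of_pos hq0 _) (pow_pos hc m)
  have he : q ^ ((((m+1) : ℕ) : ℝ) ^ 2 / 2) * c ^ (m+1)
      = (q ^ (((m : ℝ)) ^ 2 / 2) * c ^ m) * (q ^ (((2 * m + 1) : ℝ) / 2) * c) := by
    rw [mul_mul_mul_comm, ← Real.rpow_add hq0, ← pow_succ]
    congr 2
    push_cast; ring
  rw [norm_of_nonneg (by positivity), norm_of_nonneg hpos.le, he]
  calc (q ^ (((m : ℝ)) ^ 2 / 2) * c ^ m) * (q ^ (((2 * m + 1) : ℝ) / 2) * c)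
      ≤ (q ^ (((m : ℝ)) ^ 2 / 2) * c ^ m) * (1/2) := by
        apply mul_le_mul_of_nonneg_left hm hpos.le
    _ = 1/2 * (q ^ (((m : ℝ)) ^ 2 / 2) * c ^ m) := by ring

lemma summable_sTerm (hq0 : 0 < q) (hq1 : q < 1) (hζ : 0 < ζ) :
    Summable (sTerm q ζ) := by
  apply Summable.of_nat_of_neg
  · apply (summable_nat_aux hq0 hq1 hζ).congr
    intro m
    simp [sTerm, zpow_natCast]
  · apply (summable_nat_aux hq0 hq1 (inv_pos.2 hζ)).congr
    intro m
    simp only [sTerm]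
    rw [zpow_neg, zpow_natCast, inv_pow]
    push_cast
    ring_nf

lemma theta3_eq : theta3 ζ q = ∑' k : ℤ, sTerm q ζ k := rfl

lemma sTerm_zero : sTerm q ζ 0 = 1 := by
  simp [sTerm]

lemma theta3_pos (hq0 : 0 < q) (hq1 : q < 1) (hζ : 0 < ζ) : 0 < theta3 ζ q := by
  have h := Summable.le_tsum (summable_sTerm hq0 hq1 hζ) 0 (fun k _ => (sTerm_pos hq0 hζ k).le)
  rw [theta3_eq]
  calc (0:ℝ) < 1 := one_pos
    _ = sTerm q ζ 0 := sTerm_zero.symm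
    _ ≤ _ := h

lemma fTerm_nonneg (hq0 : 0 < q) (hq1 : q < 1) (hζ : 0 < ζ) (n k : ℤ) :
    0 ≤ fTerm q ζ n k := by
  unfold fTerm
  split
  · exact mul_nonneg (sTerm_pos hq0 hζ k).le (ratio_nonneg hq0 hq1 _)
  · exact le_refl 0

lemma fTerm_le_sTerm (hq0 : 0 < q) (hq1 : q < 1) (hζ : 0 < ζ) (n k : ℤ) :
    fTerm q ζ n k ≤ sTerm q ζ k := by
  unfold fTerm
  split
  · nlinarith [sTerm_pos hq0 hζ k, ratio_le_one hq0 hq1 ((n-k).toNat),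
      ratio_nonneg hq0 hq1 ((n-k).toNat)]
  · exact (sTerm_pos hq0 hζ k).le

lemma summable_fTerm (hq0 : 0 < q) (hq1 : q < 1) (hζ : 0 < ζ) (n : ℤ) :
    Summable (fTerm q ζ n) :=
  Summable.of_nonneg_of_le (fTerm_nonneg hq0 hq1 hζ n) (fTerm_le_sTerm hq0 hq1 hζ n)
    (summable_sTerm hq0 hq1 hζ)

lemma sTerm_succ (hq0 : 0 < q) (hζ : 0 < ζ) (k : ℤ) :
    ζ * q ^ ((k : ℝ) - 1/2) * sTerm q ζ (k - 1) = sTerm q ζ k := by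
  have hz : ζ ≠ 0 := hζ.ne'
  have e2 : ((k:ℝ) - 1/2) + (((k-1 : ℤ)):ℝ)^2/2 = (k:ℝ)^2/2 := by push_cast; ring
  calc ζ * q ^ ((k:ℝ) - 1/2) * (q ^ ((((k-1:ℤ)):ℝ)^2/2) * ζ^(k-1))
      = q ^ (((k:ℝ) - 1/2) + (((k-1:ℤ)):ℝ)^2/2) * (ζ^(k-1) * ζ) := by
        rw [Real.rpow_add hq0]; ring
    _ = q ^ ((k:ℝ)^2/2) * ζ^k := by
        rw [e2, ← zpow_add_one₀ hz, sub_add_cancel]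

lemma qPochFin_q_succ (m : ℕ) : qPochFin q q (m+1) = qPochFin q q m * (1 - q ^ (m+1)) := by
  rw [qPochFin, Finset.prod_range_succ, ← pow_succ']
  rfl

lemma fTerm_rec (hq0 : 0 < q) (hq1 : q < 1) (hζ : 0 < ζ) (n k : ℤ) :
    fTerm q ζ n k = fTerm q ζ (n-1) k + ζ * q ^ ((n:ℝ) - 1/2) * fTerm q ζ (n-1) (k-1) := by
  rcases lt_trichotomy n k with h | h | h
  · rw [fTerm, if_neg (by omega), fTerm, if_neg (by omega), fTerm, if_neg (by omega)]
    ring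
  · -- k = n
    subst h
    rw [fTerm, if_pos le_rfl, fTerm, if_neg (by omega), fTerm, if_pos (by omega)]
    have e0 : (n - n).toNat = 0 := by omega
    have e1 : (n - 1 - (n - 1)).toNat = 0 := by omega
    rw [e0, e1]
    have := sTerm_succ hq0 hζ (q := q) n
    rw [← this]
    ring
  · -- k < n
    have hkn : k ≤ n := h.le
    set m : ℕ := (n - k).toNat with hm
    have hm1 : 1 ≤ m := by omega
    have hmeq : ((m : ℤ)) = n - k := by omega
    have e1 : (n - 1 - k).toNat = m - 1 := by omega
    have e2 : (n - 1 - (k - 1)).toNat = m := by omega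
    rw [fTerm, if_pos hkn, fTerm, if_pos (by omega), fTerm, if_pos (by omega), e1, e2, ← hm]
    -- rewrite ζ * q^(n-1/2) * sTerm (k-1) as q^(m) * sTerm k
    have key : ζ * q ^ ((n:ℝ) - 1/2) * sTerm q ζ (k-1) = q ^ m * sTerm q ζ k := by
      have h0 : q ^ ((n:ℝ) - 1/2) = q ^ ((n:ℝ) - (k:ℝ)) * q ^ ((k:ℝ) - 1/2) := by
        rw [← Real.rpow_add hq0]
        ring_nf
      have h1 : ζ * q ^ ((n:ℝ) - 1/2) * sTerm q ζ (k-1)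
          = q ^ ((n:ℝ) - (k:ℝ)) * (ζ * q ^ ((k:ℝ) - 1/2) * sTerm q ζ (k-1)) := by
        rw [h0]; ring
      rw [h1, sTerm_succ hq0 hζ]
      congr 1
      rw [← Real.rpow_natCast q m]
      congr 1
      have : ((m:ℝ)) = ((n - k : ℤ) : ℝ) := by exact_mod_cast congrArg (Int.cast : ℤ → ℝ) hmeq
      rw [this]; push_cast; ring
    have hsplit : qPochFin q q m = qPochFin q q (m-1) * (1 - q ^ m) := by
      have hmm : m = (m-1)+1 := by omega
      rw [hmm, qPochFin_q_succ, ← hmm]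
    have hPinf := qPochInf_pos (z := q) hq0 hq1 hq1
    have hPm1 := qPochFin_pos (z := q) hq0 hq1 hq1 (m-1)
    have hst := sTerm_pos hq0 hζ k
    have h1q : (0:ℝ) < 1 - q ^ m :=
      sub_pos.2 (pow_lt_one₀ hq0.le hq1 (by omega : m ≠ 0))
    rw [show ζ * q ^ ((n:ℝ) - 1/2) * (sTerm q ζ (k-1) * (qPochInf q q / qPochFin q q m))
        = (ζ * q ^ ((n:ℝ) - 1/2) * sTerm q ζ (k-1)) * (qPochInf q q / qPochFin q q m) from by
      ring, key, hsplit]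
    field_simp
    ring

lemma tsum_fTerm_rec (hq0 : 0 < q) (hq1 : q < 1) (hζ : 0 < ζ) (n : ℤ) :
    ∑' k : ℤ, fTerm q ζ n k
      = (1 + ζ * q ^ ((n:ℝ) - 1/2)) * ∑' k : ℤ, fTerm q ζ (n-1) k := by
  have hs := summable_fTerm hq0 hq1 hζ (n-1)
  have hshift : Summable (fun k : ℤ => fTerm q ζ (n-1) (k-1)) := by
    have := ((Equiv.subRight (1:ℤ)).summable_iff (f := fTerm q ζ (n-1))).2 hs
    simpa [Function.comp_def] using this
  calc ∑' k : ℤ, fTerm q ζ n k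
      = ∑' k : ℤ, (fTerm q ζ (n-1) k + ζ * q ^ ((n:ℝ) - 1/2) * fTerm q ζ (n-1) (k-1)) :=
        tsum_congr (fTerm_rec hq0 hq1 hζ n)
    _ = (∑' k : ℤ, fTerm q ζ (n-1) k)
        + ∑' k : ℤ, ζ * q ^ ((n:ℝ) - 1/2) * fTerm q ζ (n-1) (k-1) :=
        Summable.tsum_add hs (hshift.mul_left _)
    _ = (∑' k : ℤ, fTerm q ζ (n-1) k)
        + ζ * q ^ ((n:ℝ) - 1/2) * ∑' k : ℤ, fTerm q ζ (n-1) (k-1) := by rw [tsum_mul_left]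
    _ = (1 + ζ * q ^ ((n:ℝ) - 1/2)) * ∑' k : ℤ, fTerm q ζ (n-1) k := by
        have he : ∑' k : ℤ, fTerm q ζ (n-1) (k-1) = ∑' k : ℤ, fTerm q ζ (n-1) k := by
          simpa using (Equiv.subRight (1:ℤ)).tsum_eq (fTerm q ζ (n-1))
        rw [he]; ring

lemma Gn_z_lt_one (hq0 : 0 < q) (hζ : 0 < ζ) (x : ℝ) : -ζ * q ^ x < 1 := by
  have := Real.rpow_pos_of_pos hq0 x
  nlinarith

lemma Gn_pos (hq0 : 0 < q) (hq1 : q < 1) (hζ : 0 < ζ) (n : ℤ) : 0 < Gn q ζ n :=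
  qPochInf_pos hq0 hq1 (Gn_z_lt_one hq0 hζ _)

lemma Gn_rec (hq0 : 0 < q) (hq1 : q < 1) (hζ : 0 < ζ) (n : ℤ) :
    Gn q ζ (n-1) = (1 + ζ * q ^ ((n:ℝ) - 1/2)) * Gn q ζ n := by
  have e : (1:ℝ)/2 + ((n-1 : ℤ):ℝ) = (n:ℝ) - 1/2 := by push_cast; ring
  have h := qPochInf_split hq0 hq1 (Gn_z_lt_one hq0 hζ ((n:ℝ) - 1/2)) 1
  rw [Gn, e, h]
  congr 1
  · rw [qPochFin, Finset.prod_range_one, pow_zero, mul_one]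
    ring
  · rw [Gn]
    have e2 : q ^ ((n:ℝ)-1/2) * q = q ^ ((1:ℝ)/2 + (n:ℝ)) := by
      rw [← Real.rpow_add_one hq0.ne']
      congr 1; ring
    congr 1
    rw [pow_one, mul_assoc, e2]

lemma Gn_ge_one (hq0 : 0 < q) (hq1 : q < 1) (hζ : 0 < ζ) (n : ℤ) : 1 ≤ Gn q ζ n := by
  rw [Gn, qPochInf_eq_exp hq0 hq1 (Gn_z_lt_one hq0 hζ _)]
  have h0 : (1:ℝ) ≤ Real.exp 0 := by rw [Real.exp_zero]
  refine h0.trans (Real.exp_le_exp.2 ?_)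
  apply tsum_nonneg
  intro i
  apply Real.log_nonneg
  have h1 : 0 < ζ * q ^ ((1:ℝ)/2 + (n:ℝ)) * q ^ i :=
    mul_pos (mul_pos hζ (Real.rpow_pos_of_pos hq0 _)) (pow_pos hq0 i)
  nlinarith

lemma Gn_le (hq0 : 0 < q) (hq1 : q < 1) (hζ : 0 < ζ) (n : ℤ) :
    Gn q ζ n ≤ Real.exp (ζ * q ^ ((1:ℝ)/2 + (n:ℝ)) * (1 - q)⁻¹) := by
  set c : ℝ := ζ * q ^ ((1:ℝ)/2 + (n:ℝ)) with hc
  have hcpos : 0 < c := mul_pos hζ (Real.rpow_pos_of_pos hq0 _)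
  rw [Gn, qPochInf_eq_exp hq0 hq1 (Gn_z_lt_one hq0 hζ _)]
  apply Real.exp_le_exp.2
  have hsum1 := summable_log_factor hq0 hq1 (Gn_z_lt_one hq0 hζ ((1:ℝ)/2 + (n:ℝ)))
  have hsum2 : Summable (fun i : ℕ => c * q ^ i) :=
    (summable_geometric_of_lt_one hq0.le hq1).mul_left c
  have hle : ∀ i : ℕ, Real.log (1 - -ζ * q ^ ((1:ℝ)/2 + (n:ℝ)) * q ^ i) ≤ c * q ^ i := by
    intro i
    have h1 : (1:ℝ) - -ζ * q ^ ((1:ℝ)/2 + (n:ℝ)) * q ^ i = 1 + c * q ^ i := by rw [hc]; ring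
    rw [h1]
    have h2 : 0 < 1 + c * q ^ i := by positivity
    have := Real.log_le_sub_one_of_pos h2
    linarith
  calc ∑' i : ℕ, Real.log (1 - -ζ * q ^ ((1:ℝ)/2 + (n:ℝ)) * q ^ i)
      ≤ ∑' i : ℕ, c * q ^ i := Summable.tsum_le_tsum hle hsum1 hsum2
    _ = c * (1 - q)⁻¹ := by
        rw [tsum_mul_left, tsum_geometric_of_lt_one hq0.le hq1]

lemma tendsto_rpow_int (hq0 : 0 < q) (hq1 : q < 1) :
    Tendsto (fun N : ℤ => q ^ ((1:ℝ)/2 + (N:ℝ))) atTop (𝓝 0) := by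
  have h1 : Tendsto (fun x : ℝ => q ^ x) atTop (𝓝 0) :=
    tendsto_rpow_atTop_of_base_lt_one q (by linarith) hq1
  have h2 : Tendsto (fun N : ℤ => (1:ℝ)/2 + (N:ℝ)) atTop atTop :=
    tendsto_atTop_add_const_left _ _ tendsto_intCast_atTop_atTop
  exact h1.comp h2

lemma tendsto_Gn (hq0 : 0 < q) (hq1 : q < 1) (hζ : 0 < ζ) :
    Tendsto (fun N : ℤ => Gn q ζ N) atTop (𝓝 1) := by
  have hupper : Tendsto (fun N : ℤ => Real.exp (ζ * q ^ ((1:ℝ)/2 + (N:ℝ)) * (1 - q)⁻¹))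
      atTop (𝓝 1) := by
    have hn : (𝓝 (1:ℝ)) = 𝓝 (Real.exp 0) := by rw [Real.exp_zero]
    rw [hn]
    apply (Real.continuous_exp.tendsto 0).comp
    have := ((tendsto_rpow_int hq0 hq1).const_mul ζ).mul_const (1 - q)⁻¹
    simpa using this
  have hlower : Tendsto (fun _ : ℤ => (1:ℝ)) atTop (𝓝 1) := tendsto_const_nhds
  exact tendsto_of_tendsto_of_tendsto_of_le_of_le hlower hupper
    (fun N => Gn_ge_one hq0 hq1 hζ N) (fun N => Gn_le hq0 hq1 hζ N)

lemma tendsto_toNat : Tendsto (fun N : ℤ => (N - k).toNat) atTop atTop := by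
  apply tendsto_atTop.2
  intro b
  filter_upwards [eventually_ge_atTop (k + b)] with N hN
  omega

lemma tendsto_fTerm (hq0 : 0 < q) (hq1 : q < 1) (hζ : 0 < ζ) (k : ℤ) :
    Tendsto (fun N : ℤ => fTerm q ζ N k) atTop (𝓝 (sTerm q ζ k)) := by
  have h1 : Tendsto (fun N : ℤ => sTerm q ζ k * (qPochInf q q / qPochFin q q (N - k).toNat))
      atTop (𝓝 (sTerm q ζ k * 1)) :=
    (((tendsto_ratio hq0 hq1).comp (tendsto_toNat (k := k)))).const_mul _
  rw [mul_one] at h1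
  apply h1.congr'
  filter_upwards [eventually_ge_atTop k] with N hN
  rw [fTerm, if_pos hN]

lemma tendsto_tsum_fTerm (hq0 : 0 < q) (hq1 : q < 1) (hζ : 0 < ζ) :
    Tendsto (fun N : ℤ => ∑' k : ℤ, fTerm q ζ N k) atTop (𝓝 (theta3 ζ q)) := by
  rw [theta3_eq]
  apply tendsto_tsum_of_dominated_convergence (bound := sTerm q ζ) (summable_sTerm hq0 hq1 hζ)
    (tendsto_fTerm hq0 hq1 hζ)
  filter_upwards with N k
  rw [Real.norm_eq_abs, abs_of_nonneg (fTerm_nonneg hq0 hq1 hζ N k)]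
  exact fTerm_le_sTerm hq0 hq1 hζ N k

lemma A_const (hq0 : 0 < q) (hq1 : q < 1) (hζ : 0 < ζ) (n : ℤ) :
    Gn q ζ n * ∑' k : ℤ, fTerm q ζ n k = theta3 ζ q := by
  have key : ∀ N : ℤ, Gn q ζ (N-1) * ∑' k : ℤ, fTerm q ζ (N-1) k
      = Gn q ζ N * ∑' k : ℤ, fTerm q ζ N k := by
    intro N
    rw [tsum_fTerm_rec hq0 hq1 hζ N, Gn_rec hq0 hq1 hζ N]
    ring
  have step : ∀ m : ℕ, Gn q ζ n * ∑' k : ℤ, fTerm q ζ n k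
      = Gn q ζ (n + m) * ∑' k : ℤ, fTerm q ζ (n + m) k := by
    intro m
    induction m with
    | zero => simp
    | succ m ih =>
      rw [ih]
      have := key (n + m + 1)
      rw [show n + (m:ℤ) + 1 - 1 = n + m by ring] at this
      rw [this]
      congr 2 <;> push_cast <;> ring
  have hcast : Tendsto (fun m : ℕ => n + (m : ℤ)) atTop atTop :=
    tendsto_atTop_add_const_left _ _ tendsto_natCast_atTop_atTop
  have hlim : Tendsto (fun m : ℕ => Gn q ζ (n + m) * ∑' k : ℤ, fTerm q ζ (n + m) k)
      atTop (𝓝 (theta3 ζ q)) := by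
    have := ((tendsto_Gn hq0 hq1 hζ).mul (tendsto_tsum_fTerm hq0 hq1 hζ)).comp hcast
    simpa [Function.comp_def] using this
  have hconst : Tendsto (fun m : ℕ => Gn q ζ (n + m) * ∑' k : ℤ, fTerm q ζ (n + m) k)
      atTop (𝓝 (Gn q ζ n * ∑' k : ℤ, fTerm q ζ n k)) := by
    apply Tendsto.congr (fun m => step m) tendsto_const_nhds
  exact tendsto_nhds_unique hconst hlim

lemma tsum_fTerm_eq (hq0 : 0 < q) (hq1 : q < 1) (hζ : 0 < ζ) (n : ℤ) :
    ∑' k : ℤ, fTerm q ζ n k = theta3 ζ q / Gn q ζ n := by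
  have h := A_const hq0 hq1 hζ n
  field_simp [(Gn_pos hq0 hq1 hζ n).ne']
  linarith [h]


end Aux

open Real Filter Topology in
/-- If `χ` is `q`-geometric and `S` is (independently) theta distributed with parameters
`ζ, q`, then `P(χ + S ≤ n) = 1/(-ζ q^{1/2+n}; q)_∞`. -/
theorem stmt0 {Ω : Type*} [MeasurableSpace Ω] (μ : Measure Ω) [IsProbabilityMeasure μ]
    (q ζ : ℝ) (hq : q ∈ Set.Ioo (0:ℝ) 1) (hζ : 0 < ζ)
    (χ : Ω → ℕ) (S : Ω → ℤ) (hχ : Measurable χ) (hS : Measurable S)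
    (hindep : ProbabilityTheory.IndepFun χ S μ)
    (hχdist : ∀ k : ℕ, μ {ω | χ ω = k} =
      ENNReal.ofReal (q ^ k * qPochInf q q / qPochFin q q k))
    (hSdist : ∀ k : ℤ, μ {ω | S ω = k} =
      ENNReal.ofReal (q ^ (((k : ℝ) ^ 2) / 2) * ζ ^ k / theta3 ζ q))
    (n : ℤ) :
    μ {ω | (χ ω : ℤ) + S ω ≤ n} =
      ENNReal.ofReal (1 / qPochInf (-ζ * q ^ ((1 : ℝ) / 2 + (n : ℝ))) q) := by
  obtain ⟨hq0, hq1⟩ := hq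
  have hPinf := qPochInf_pos (z := q) hq0 hq1 hq1
  have hθ := theta3_pos hq0 hq1 hζ (q := q) (ζ := ζ)
  have hGn := Gn_pos hq0 hq1 hζ (q := q) (ζ := ζ) n
  -- finite geometric q-identity
  have hfin : ∀ m : ℕ, ∑ j ∈ Finset.range (m+1), q ^ j * qPochInf q q / qPochFin q q j
      = qPochInf q q / qPochFin q q m := by
    intro m
    induction m with
    | zero => simp [qPochFin]
    | succ m ih =>
      rw [Finset.sum_range_succ, ih, qPochFin_q_succ]
      have h1 := qPochFin_pos (z := q) hq0 hq1 hq1 m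
      have h2 : (0:ℝ) < 1 - q ^ (m+1) :=
        sub_pos.2 (pow_lt_one₀ hq0.le hq1 (Nat.succ_ne_zero m))
      field_simp
      ring
  -- CDF of χ
  have hCDF : ∀ m : ℕ, μ {ω | χ ω ≤ m} = ENNReal.ofReal (qPochInf q q / qPochFin q q m) := by
    intro m
    have hset : {ω | χ ω ≤ m} = ⋃ j ∈ Finset.range (m+1), {ω | χ ω = j} := by
      ext ω
      simp [Nat.lt_succ_iff]
    rw [hset, measure_biUnion_finset]
    · rw [Finset.sum_congr rfl (fun j _ => hχdist j),
        ← ENNReal.ofReal_sum_of_nonneg (fun j _ => div_nonneg (mul_nonneg (pow_nonneg hq0.le j) hPinf.le) (qPochFin_pos hq0 hq1 hq1 j).le), hfin]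
    · intro a _ b _ hab
      simp only [Function.onFun, Set.disjoint_left]
      intro ω h1 h2
      exact hab (h1.symm.trans h2)
    · intro j _
      exact hχ (measurableSet_singleton j)
  -- decomposition over values of S
  set E : ℤ → Set Ω := fun k => χ ⁻¹' {j : ℕ | (j : ℤ) ≤ n - k} ∩ S ⁻¹' {k} with hE
  have hdecomp : {ω | (χ ω : ℤ) + S ω ≤ n} = ⋃ k : ℤ, E k := by
    ext ω
    simp only [hE, Set.mem_setOf_eq, Set.mem_iUnion, Set.mem_inter_iff, Set.mem_preimage,
      Set.mem_singleton_iff]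
    constructor
    · intro h
      exact ⟨S ω, by omega, rfl⟩
    · rintro ⟨k, h1, rfl⟩
      omega
  have hEmeas : ∀ k : ℤ, MeasurableSet (E k) :=
    fun k => (hχ (measurableSet_setOf.2 (by measurability))).inter (hS (measurableSet_singleton k))
  have hdisj : Pairwise (Function.onFun Disjoint E) := by
    intro a b hab
    simp only [Function.onFun, hE, Set.disjoint_left]
    rintro ω ⟨_, h1⟩ ⟨_, h2⟩
    simp only [Set.mem_preimage, Set.mem_singleton_iff] at h1 h2
    exact hab (h1.symm.trans h2)
  have hμE : ∀ k : ℤ, μ (E k) = ENNReal.ofReal (fTerm q ζ n k / theta3 ζ q) := by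
    intro k
    have hSk : μ (S ⁻¹' {k}) = ENNReal.ofReal (sTerm q ζ k / theta3 ζ q) := by
      have := hSdist k
      simpa [Set.preimage, sTerm] using this
    rw [hE]
    rw [hindep.measure_inter_preimage_eq_mul _ _ (measurableSet_setOf.2 (by measurability))
      (measurableSet_singleton k)]
    rcases le_or_gt k n with hkn | hkn
    · have hA : {j : ℕ | (j : ℤ) ≤ n - k} = {j : ℕ | j ≤ (n - k).toNat} := by
        ext j; simp only [Set.mem_setOf_eq]; omega
      have : χ ⁻¹' {j : ℕ | (j : ℤ) ≤ n - k} = {ω | χ ω ≤ (n - k).toNat} := by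
        rw [hA]; rfl
      rw [this, hCDF, hSk, ← ENNReal.ofReal_mul (ratio_nonneg hq0 hq1 _)]
      rw [fTerm, if_pos hkn]
      congr 1
      ring
    · have hA : {j : ℕ | (j : ℤ) ≤ n - k} = ∅ := by
        ext j; simp only [Set.mem_setOf_eq, Set.mem_empty_iff_false, iff_false]; omega
      rw [hA]
      simp [fTerm, if_neg (not_le.2 hkn)]
  rw [hdecomp, measure_iUnion hdisj hEmeas]
  have hsumm : Summable (fun k : ℤ => fTerm q ζ n k / theta3 ζ q) :=
    (summable_fTerm hq0 hq1 hζ n).div_const _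
  calc ∑' k : ℤ, μ (E k) = ∑' k : ℤ, ENNReal.ofReal (fTerm q ζ n k / theta3 ζ q) :=
        tsum_congr hμE
    _ = ENNReal.ofReal (∑' k : ℤ, fTerm q ζ n k / theta3 ζ q) :=
        (ENNReal.ofReal_tsum_of_nonneg
          (fun k => div_nonneg (fTerm_nonneg hq0 hq1 hζ n k) hθ.le) hsumm).symm
    _ = ENNReal.ofReal (1 / qPochInf (-ζ * q ^ ((1 : ℝ) / 2 + (n : ℝ))) q) := by
        congr 1
        rw [tsum_div_const, tsum_fTerm_eq hq0 hq1 hζ n]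
        rw [div_right_comm, div_self hθ.ne']
        rfl
end
end

section
/- Let a ∈ (0,1), r > 1, and define g(z) = log(1 − a/z) − log(1 − a z) and h(z) = g(z) − L log z where L = 2a/(1−a). Then h(1) = h'(1) = h''(1) = 0 and h'''(1) = 2σ³ where σ = a^{1/3}(1+a)^{1/3}/(1−a); in particular h'''(1) > 0. -/
noncomputable section

/-- the function `h(z) = log(1 − a/z) − log(1 − a z) − L log z` -/
def hfun (a L : ℝ) (z : ℂ) : ℂ :=
  Complex.log (1 - (a : ℂ) / z) - Complex.log (1 - (a : ℂ) * z) - (L : ℂ) * Complex.log z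

namespace Stmt7Aux

/-- first derivative of `hfun`, in partial-fraction form -/
def f1 (a L : ℝ) (z : ℂ) : ℂ :=
  (z - (a : ℂ))⁻¹ + (a : ℂ) * (1 - (a : ℂ) * z)⁻¹ - (1 + (L : ℂ)) * z⁻¹

/-- second derivative of `hfun` -/
def f2 (a L : ℝ) (z : ℂ) : ℂ :=
  -((z - (a : ℂ)) ^ 2)⁻¹ + (a : ℂ) ^ 2 * ((1 - (a : ℂ) * z) ^ 2)⁻¹ + (1 + (L : ℂ)) * (z ^ 2)⁻¹

/-- third derivative of `hfun` -/
def f3 (a L : ℝ) (z : ℂ) : ℂ :=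
  2 * ((z - (a : ℂ)) ^ 3)⁻¹ + 2 * (a : ℂ) ^ 3 * ((1 - (a : ℂ) * z) ^ 3)⁻¹
    - 2 * (1 + (L : ℂ)) * (z ^ 3)⁻¹

lemma hasDerivAt_hfun (a L : ℝ) (ha : (a : ℂ) ≠ 0) (z : ℂ) (hz : z ≠ 0)
    (hzb : z - (a : ℂ) ≠ 0) (hB : 1 - (a : ℂ) * z ≠ 0)
    (hs1 : 1 - (a : ℂ) / z ∈ Complex.slitPlane)
    (hs2 : 1 - (a : ℂ) * z ∈ Complex.slitPlane)
    (hs3 : z ∈ Complex.slitPlane) :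
    HasDerivAt (hfun a L) (f1 a L z) z := by
  have hA : (1 : ℂ) - a / z ≠ 0 := Complex.slitPlane_ne_zero hs1
  have hB' : -1 + (a : ℂ) * z ≠ 0 := fun h => hB (by linear_combination -h)
  have hB'' : (a : ℂ) * z - 1 ≠ 0 := fun h => hB (by linear_combination -h)
  have hB''' : -1 + z * (a : ℂ) ≠ 0 := fun h => hB (by linear_combination -h)
  have hB'''' : z * (a : ℂ) - 1 ≠ 0 := fun h => hB (by linear_combination -h)
  have e : hfun a L = fun w : ℂ =>
      Complex.log (1 - (a : ℂ) * w⁻¹) - Complex.log (1 - (a : ℂ) * w)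
        - (L : ℂ) * Complex.log w := by
    funext w; simp [hfun, div_eq_mul_inv]
  have hs1' : 1 - (a : ℂ) * z⁻¹ ∈ Complex.slitPlane := by
    rwa [← div_eq_mul_inv]
  have hA' : (1 : ℂ) - a * z⁻¹ ≠ 0 := by rwa [← div_eq_mul_inv]
  rw [e]
  have d1 : HasDerivAt (fun w : ℂ => 1 - (a : ℂ) * w⁻¹) (-((a : ℂ) * -(z ^ 2)⁻¹)) z :=
    (HasDerivAt.const_mul (a : ℂ) (hasDerivAt_inv hz)).const_sub 1
  have d2 : HasDerivAt (fun w : ℂ => 1 - (a : ℂ) * w) (-((a : ℂ) * 1)) z :=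
    (HasDerivAt.const_mul (a : ℂ) (hasDerivAt_id z)).const_sub 1
  have d3 : HasDerivAt Complex.log z⁻¹ z := Complex.hasDerivAt_log hs3
  have total := ((d1.clog hs1').sub (d2.clog hs2)).sub (d3.const_mul (L : ℂ))
  refine total.congr_deriv ?_
  symm
  rw [f1, show (1 : ℂ) - (a : ℂ) * z⁻¹ = (z - (a : ℂ)) * z⁻¹ by field_simp]
  field_simp
  try rw [eq_div_iff (by simp [mul_eq_zero, hz, hzb, hB, pow_eq_zero_iff])]
  try rw [div_eq_iff (by simp [mul_eq_zero, hz, hzb, hB, pow_eq_zero_iff])]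
  ring

lemma hasDerivAt_f1 (a L : ℝ) (z : ℂ) (hz : z ≠ 0)
    (hzb : z - (a : ℂ) ≠ 0) (hB : 1 - (a : ℂ) * z ≠ 0) :
    HasDerivAt (f1 a L) (f2 a L z) z := by
  have hB' : -1 + (a : ℂ) * z ≠ 0 := fun h => hB (by linear_combination -h)
  have hB'' : (a : ℂ) * z - 1 ≠ 0 := fun h => hB (by linear_combination -h)
  have hB''' : -1 + z * (a : ℂ) ≠ 0 := fun h => hB (by linear_combination -h)
  have hB'''' : z * (a : ℂ) - 1 ≠ 0 := fun h => hB (by linear_combination -h)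
  have d1 : HasDerivAt (fun w : ℂ => (w - (a : ℂ))⁻¹) (-1 / (z - (a : ℂ)) ^ 2) z :=
    ((hasDerivAt_id z).sub_const (a : ℂ)).inv hzb
  have d2 : HasDerivAt (fun w : ℂ => (a : ℂ) * (1 - (a : ℂ) * w)⁻¹)
      ((a : ℂ) * (-(-((a : ℂ) * 1)) / (1 - (a : ℂ) * z) ^ 2)) z :=
    HasDerivAt.const_mul _
      (((HasDerivAt.const_mul (a : ℂ) (hasDerivAt_id z)).const_sub 1).inv hB)
  have d3 : HasDerivAt (fun w : ℂ => (1 + (L : ℂ)) * w⁻¹)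
      ((1 + (L : ℂ)) * -(z ^ 2)⁻¹) z :=
    HasDerivAt.const_mul _ (hasDerivAt_inv hz)
  have total := (d1.add d2).sub d3
  refine total.congr_deriv ?_
  symm
  rw [f2]
  field_simp
  try rw [eq_div_iff (by simp [mul_eq_zero, hz, hzb, hB, pow_eq_zero_iff])]
  try rw [div_eq_iff (by simp [mul_eq_zero, hz, hzb, hB, pow_eq_zero_iff])]
  ring

lemma hasDerivAt_f2 (a L : ℝ) (z : ℂ) (hz : z ≠ 0)
    (hzb : z - (a : ℂ) ≠ 0) (hB : 1 - (a : ℂ) * z ≠ 0) :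
    HasDerivAt (f2 a L) (f3 a L z) z := by
  have hB' : -1 + (a : ℂ) * z ≠ 0 := fun h => hB (by linear_combination -h)
  have hB'' : (a : ℂ) * z - 1 ≠ 0 := fun h => hB (by linear_combination -h)
  have hB''' : -1 + z * (a : ℂ) ≠ 0 := fun h => hB (by linear_combination -h)
  have hB'''' : z * (a : ℂ) - 1 ≠ 0 := fun h => hB (by linear_combination -h)
  have d1 : HasDerivAt (fun w : ℂ => ((w - (a : ℂ)) ^ 2)⁻¹)
      (-((2 : ℂ) * (z - (a : ℂ)) ^ (2 - 1) * 1) / ((z - (a : ℂ)) ^ 2) ^ 2) z :=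
    (((hasDerivAt_id z).sub_const (a : ℂ)).pow 2).inv (pow_ne_zero 2 hzb)
  have d2 : HasDerivAt (fun w : ℂ => (a : ℂ) ^ 2 * ((1 - (a : ℂ) * w) ^ 2)⁻¹)
      ((a : ℂ) ^ 2 * (-((2 : ℂ) * (1 - (a : ℂ) * z) ^ (2 - 1) * -((a : ℂ) * 1))
        / ((1 - (a : ℂ) * z) ^ 2) ^ 2)) z :=
    HasDerivAt.const_mul _
      ((((HasDerivAt.const_mul (a : ℂ) (hasDerivAt_id z)).const_sub 1).pow 2).inv
        (pow_ne_zero 2 hB))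
  have d3 : HasDerivAt (fun w : ℂ => (1 + (L : ℂ)) * (w ^ 2)⁻¹)
      ((1 + (L : ℂ)) * (-((2 : ℂ) * z ^ (2 - 1)) / (z ^ 2) ^ 2)) z :=
    HasDerivAt.const_mul _ ((hasDerivAt_pow 2 z).inv (pow_ne_zero 2 hz))
  have total := (d1.neg.add d2).add d3
  refine total.congr_deriv ?_
  symm
  rw [f3]
  simp only [show (2:ℕ) - 1 = 1 from rfl, pow_one, mul_one]
  field_simp
  try rw [eq_div_iff (by simp [mul_eq_zero, hz, hzb, hB, pow_eq_zero_iff])]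
  try rw [div_eq_iff (by simp [mul_eq_zero, hz, hzb, hB, pow_eq_zero_iff])]
  ring

end Stmt7Aux

open Stmt7Aux in
/-- With `L = 2a/(1−a)` and `σ = a^{1/3}(1+a)^{1/3}/(1−a)`, the function
`h(z) = g(z) − L log z` has a doubly critical point at `z = 1`:
`h(1) = h'(1) = h''(1) = 0` and `h'''(1) = 2σ³ > 0`. -/
theorem stmt7 (a r : ℝ) (ha : a ∈ Set.Ioo (0:ℝ) 1) (hr : 1 < r)
    (L σ : ℝ) (hL : L = 2 * a / (1 - a))
    (hσ : σ = a ^ ((1:ℝ)/3) * (1 + a) ^ ((1:ℝ)/3) / (1 - a)) :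
    hfun a L 1 = 0 ∧ deriv (hfun a L) 1 = 0 ∧ deriv (deriv (hfun a L)) 1 = 0 ∧
      deriv (deriv (deriv (hfun a L))) 1 = 2 * (σ : ℂ) ^ 3 ∧ (0:ℝ) < 2 * σ ^ 3 := by
  obtain ⟨ha0, ha1⟩ := ha
  have h1ma : (0:ℝ) < 1 - a := by linarith
  have hb0 : (a : ℂ) ≠ 0 := by exact_mod_cast ha0.ne'
  have hb1 : (a : ℂ) ≠ 1 := by exact_mod_cast ha1.ne
  have h1b : (1 : ℂ) - a ≠ 0 := sub_ne_zero.mpr (Ne.symm hb1)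
  have h1b' : (a : ℂ) - 1 ≠ 0 := fun h => h1b (by linear_combination -h)
  have h1b'' : -1 + (a : ℂ) ≠ 0 := fun h => h1b (by linear_combination -h)
  have hB1 : (1 : ℂ) - (a : ℂ) * 1 ≠ 0 := by simpa using h1b
  have hLc : (L : ℂ) = 2 * a / (1 - a) := by rw [hL]; push_cast; ring
  -- eventual conditions near 1
  have ev0 : ∀ᶠ z in nhds (1 : ℂ), z ≠ 0 := eventually_ne_nhds one_ne_zero
  have ev1 : ∀ᶠ z in nhds (1 : ℂ), z - (a : ℂ) ≠ 0 := by
    have hc : ContinuousAt (fun z : ℂ => z - (a : ℂ)) 1 := by fun_prop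
    have h := hc.tendsto.eventually (eventually_ne_nhds (by simpa using h1b))
    simpa using h
  have ev2 : ∀ᶠ z in nhds (1 : ℂ), 1 - (a : ℂ) * z ≠ 0 := by
    have hc : ContinuousAt (fun z : ℂ => 1 - (a : ℂ) * z) 1 := by fun_prop
    have h := hc.tendsto.eventually (eventually_ne_nhds (by simpa using hB1))
    simpa using h
  have mem1 : ((1 : ℂ) - a) ∈ Complex.slitPlane := by
    rw [show (1 : ℂ) - a = ((1 - a : ℝ) : ℂ) by push_cast; ring]
    exact Complex.ofReal_mem_slitPlane.mpr h1ma
  have ev3 : ∀ᶠ z in nhds (1 : ℂ), 1 - (a : ℂ) / z ∈ Complex.slitPlane := by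
    have hc : ContinuousAt (fun z : ℂ => 1 - (a : ℂ) / z) 1 := by
      apply ContinuousAt.sub continuousAt_const
      exact ContinuousAt.div continuousAt_const continuousAt_id one_ne_zero
    have h := hc.tendsto.eventually (Complex.isOpen_slitPlane.eventually_mem
      (by simpa using mem1))
    simpa using h
  have ev4 : ∀ᶠ z in nhds (1 : ℂ), 1 - (a : ℂ) * z ∈ Complex.slitPlane := by
    have hc : ContinuousAt (fun z : ℂ => 1 - (a : ℂ) * z) 1 := by fun_prop
    have h := hc.tendsto.eventually (Complex.isOpen_slitPlane.eventually_mem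
      (by simpa using mem1))
    simpa using h
  have ev5 : ∀ᶠ z in nhds (1 : ℂ), z ∈ Complex.slitPlane :=
    Complex.isOpen_slitPlane.eventually_mem Complex.one_mem_slitPlane
  have E1 : deriv (hfun a L) =ᶠ[nhds (1 : ℂ)] f1 a L := by
    filter_upwards [ev0, ev1, ev2, ev3, ev4, ev5] with z hz h1 h2 h3 h4 h5
    exact (hasDerivAt_hfun a L hb0 z hz h1 h2 h3 h4 h5).deriv
  have E2 : deriv (f1 a L) =ᶠ[nhds (1 : ℂ)] f2 a L := by
    filter_upwards [ev0, ev1, ev2] with z hz h1 h2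
    exact (hasDerivAt_f1 a L z hz h1 h2).deriv
  -- value at 1
  have v0 : hfun a L 1 = 0 := by
    simp [hfun, Complex.log_one]
  -- first derivative
  have v1 : deriv (hfun a L) 1 = 0 := by
    rw [E1.self_of_nhds, f1, hLc]
    field_simp
    try rw [eq_div_iff (by simp [mul_eq_zero, h1b, hB1, pow_eq_zero_iff])]
    try rw [div_eq_iff (by simp [mul_eq_zero, h1b, hB1, pow_eq_zero_iff])]
    ring
  -- second derivative
  have v2 : deriv (deriv (hfun a L)) 1 = 0 := by
    rw [E1.deriv.self_of_nhds, (hasDerivAt_f1 a L 1 one_ne_zero h1b hB1).deriv, f2, hLc]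
    field_simp
    try rw [eq_div_iff (by simp [mul_eq_zero, h1b, hB1, pow_eq_zero_iff])]
    try rw [div_eq_iff (by simp [mul_eq_zero, h1b, hB1, pow_eq_zero_iff])]
    ring
  -- third derivative
  have hσ3 : σ ^ 3 = a * (1 + a) / (1 - a) ^ 3 := by
    rw [hσ, div_pow, mul_pow,
      ← Real.rpow_natCast (a ^ ((1:ℝ)/3)) 3, ← Real.rpow_natCast ((1 + a) ^ ((1:ℝ)/3)) 3,
      ← Real.rpow_mul ha0.le, ← Real.rpow_mul (by linarith : (0:ℝ) ≤ 1 + a)]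
    norm_num
  have hσ3c : (σ : ℂ) ^ 3 = (a : ℂ) * (1 + a) / (1 - a) ^ 3 := by
    have := congrArg (fun x : ℝ => (x : ℂ)) hσ3
    push_cast at this
    simpa using this
  have v3 : deriv (deriv (deriv (hfun a L))) 1 = 2 * (σ : ℂ) ^ 3 := by
    have F : deriv (deriv (hfun a L)) =ᶠ[nhds (1 : ℂ)] f2 a L := E1.deriv.trans E2
    rw [F.deriv_eq, (hasDerivAt_f2 a L 1 one_ne_zero h1b hB1).deriv, f3, hσ3c, hLc]
    field_simp
    try rw [eq_div_iff (by simp [mul_eq_zero, h1b, hB1, pow_eq_zero_iff])]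
    try rw [div_eq_iff (by simp [mul_eq_zero, h1b, hB1, pow_eq_zero_iff])]
    ring
  refine ⟨v0, v1, v2, v3, ?_⟩
  rw [hσ3]
  positivity
end
end

section
/- Let a ∈ (0,1), r > 1 with ar < 1, and define g(z) = log(1 − a/z) − log(1 − az), h(z) = g(z) − L log z with L = 2a/(1−a). Then for θ ∈ (0, π), the derivative in θ of Re h(r e^{iθ}) equals (a(1−a²) sin θ) / (|1 − (a/r)e^{−iθ}|² |1 − a r e^{iθ}|²) · (r^{−1} − r), which is strictly negative; in particular θ ↦ Re h(re^{iθ}) is strictly decreasing on (0,π), so the circle |z| = r is a steep descent contour for Re h. -/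
noncomputable section

/-- the claimed value of the derivative `d/dθ Re h(r e^{iθ})` -/
def Dval (a r θ : ℝ) : ℝ :=
  a * (1 - a ^ 2) * Real.sin θ /
      (‖1 - ((a / r : ℝ) : ℂ) * Complex.exp (-((θ : ℂ) * Complex.I))‖ ^ 2 *
        ‖1 - ((a * r : ℝ) : ℂ) * Complex.exp ((θ : ℂ) * Complex.I)‖ ^ 2) *
    (r⁻¹ - r)

lemma absq (c t : ℝ) : ‖1 - (c:ℂ) * Complex.exp ((t:ℂ)*Complex.I)‖ ^ 2
    = 1 - 2*c*Real.cos t + c^2 := by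
  rw [Complex.sq_norm, Complex.normSq_apply]
  simp [Complex.exp_mul_I, Complex.sub_re, Complex.sub_im, Complex.add_re, Complex.add_im,
    Complex.mul_re, Complex.mul_im, Complex.cos_ofReal_re, Complex.sin_ofReal_re,
    ← Complex.ofReal_cos, ← Complex.ofReal_sin]
  nlinarith [Real.sin_sq_add_cos_sq t]

lemma absq_neg (c t : ℝ) : ‖1 - (c:ℂ) * Complex.exp (-((t:ℂ)*Complex.I))‖ ^ 2
    = 1 - 2*c*Real.cos t + c^2 := by
  have : -((t:ℂ)*Complex.I) = ((-t : ℝ):ℂ)*Complex.I := by push_cast; ring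
  rw [this, absq, Real.cos_neg]

lemma dpos (c t : ℝ) (hc0 : 0 ≤ c) (hc1 : c < 1) : 0 < 1 - 2*c*Real.cos t + c^2 := by
  nlinarith [Real.cos_le_one t, Real.neg_one_le_cos t, sq_nonneg (1 - c)]

lemma re_formula (a L r t : ℝ) (hr : 0 < r) :
    (hfun a L ((r : ℂ) * Complex.exp ((t : ℂ) * Complex.I))).re
      = (1/2) * Real.log (1 - 2*(a/r)*Real.cos t + (a/r)^2)
        - (1/2) * Real.log (1 - 2*(a*r)*Real.cos t + (a*r)^2) - L * Real.log r := by
  have hexp := Complex.exp_ne_zero ((t:ℂ)*Complex.I)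
  have hrne : (r:ℂ) ≠ 0 := by exact_mod_cast hr.ne'
  have h1 : (a:ℂ) / ((r : ℂ) * Complex.exp ((t : ℂ) * Complex.I))
      = ((a/r : ℝ):ℂ) * Complex.exp (-((t:ℂ)*Complex.I)) := by
    rw [Complex.exp_neg]; push_cast; field_simp
  have h2 : (a:ℂ) * ((r : ℂ) * Complex.exp ((t : ℂ) * Complex.I))
      = ((a*r : ℝ):ℂ) * Complex.exp ((t:ℂ)*Complex.I) := by push_cast; ring
  have habs : ‖(r : ℂ) * Complex.exp ((t : ℂ) * Complex.I)‖ = r := by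
    rw [norm_mul, Complex.norm_exp_ofReal_mul_I, Complex.norm_real, Real.norm_eq_abs, abs_of_pos hr, mul_one]
  have hl : ∀ w : ℂ, (Complex.log w).re = (1/2) * Real.log (‖w‖ ^ 2) := by
    intro w
    rw [Complex.log_re, Real.log_pow]; push_cast; ring
  rw [hfun, Complex.sub_re, Complex.sub_re, h1, h2, hl, hl, absq_neg, absq,
    Complex.mul_re, Complex.ofReal_re, Complex.ofReal_im, Complex.log_re, habs]
  ring


/-- Steep descent: for `a ∈ (0,1)`, `1 < r`, `a r < 1` and `L = 2a/(1−a)`, the derivative in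
`θ ∈ (0,π)` of `Re h(r e^{iθ})` equals
`(a(1−a²) sin θ)/(|1−(a/r)e^{−iθ}|²|1−a r e^{iθ}|²)·(r⁻¹−r) < 0`; in particular
`θ ↦ Re h(re^{iθ})` is strictly decreasing on `(0,π)`. -/
theorem stmt8 (a r : ℝ) (ha : a ∈ Set.Ioo (0:ℝ) 1) (hr : 1 < r) (har : a * r < 1)
    (L : ℝ) (hL : L = 2 * a / (1 - a)) :
    (∀ θ ∈ Set.Ioo (0:ℝ) Real.pi,
      HasDerivAt (fun t : ℝ => (hfun a L ((r : ℂ) * Complex.exp ((t : ℂ) * Complex.I))).re)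
        (Dval a r θ) θ ∧ Dval a r θ < 0) ∧
    StrictAntiOn (fun t : ℝ => (hfun a L ((r : ℂ) * Complex.exp ((t : ℂ) * Complex.I))).re)
      (Set.Ioo 0 Real.pi) := by

  obtain ⟨ha0, ha1⟩ := ha
  have hr0 : (0:ℝ) < r := lt_trans one_pos hr
  have hc1 : a / r < 1 := by
    rw [div_lt_one hr0]; linarith
  have hc10 : 0 ≤ a / r := le_of_lt (div_pos ha0 hr0)
  have hc20 : 0 ≤ a * r := le_of_lt (mul_pos ha0 hr0)
  -- derivative statement at any t
  have key : ∀ t : ℝ, HasDerivAt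
      (fun t : ℝ => (hfun a L ((r : ℂ) * Complex.exp ((t : ℂ) * Complex.I))).re)
      (Dval a r t) t := by
    intro t
    have hd1 : (0:ℝ) < 1 - 2*(a/r)*Real.cos t + (a/r)^2 := dpos _ _ hc10 hc1
    have hd2 : (0:ℝ) < 1 - 2*(a*r)*Real.cos t + (a*r)^2 := dpos _ _ hc20 har
    have H1 : HasDerivAt (fun t => 1 - 2*(a/r)*Real.cos t + (a/r)^2) (2*(a/r)*Real.sin t) t := by
      have := ((Real.hasDerivAt_cos t).const_mul (2*(a/r))).const_sub 1
      have := this.add_const ((a/r)^2)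
      exact this.congr_deriv (by ring)
    have H2 : HasDerivAt (fun t => 1 - 2*(a*r)*Real.cos t + (a*r)^2) (2*(a*r)*Real.sin t) t := by
      have := ((Real.hasDerivAt_cos t).const_mul (2*(a*r))).const_sub 1
      have := this.add_const ((a*r)^2)
      exact this.congr_deriv (by ring)
    have HL1 := (H1.log hd1.ne').const_mul (1/2 : ℝ)
    have HL2 := (H2.log hd2.ne').const_mul (1/2 : ℝ)
    have HF : HasDerivAt (fun t => (1/2) * Real.log (1 - 2*(a/r)*Real.cos t + (a/r)^2)
        - (1/2) * Real.log (1 - 2*(a*r)*Real.cos t + (a*r)^2) - L * Real.log r)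
        ((1/2) * (2*(a/r)*Real.sin t / (1 - 2*(a/r)*Real.cos t + (a/r)^2))
          - (1/2) * (2*(a*r)*Real.sin t / (1 - 2*(a*r)*Real.cos t + (a*r)^2))) t :=
      (HL1.sub HL2).sub_const _
    have heq : (fun t : ℝ => (hfun a L ((r : ℂ) * Complex.exp ((t : ℂ) * Complex.I))).re)
        = (fun t => (1/2) * Real.log (1 - 2*(a/r)*Real.cos t + (a/r)^2)
          - (1/2) * Real.log (1 - 2*(a*r)*Real.cos t + (a*r)^2) - L * Real.log r) := by
      funext s; exact re_formula a L r s hr0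
    rw [heq]
    convert HF using 1
    rw [Dval, absq_neg, absq]
    have expand : ∀ d1 d2 s u v : ℝ, d1 ≠ 0 → d2 ≠ 0 →
        (1/2)*(2*u*s/d1) - (1/2)*(2*v*s/d2) = (u*s*d2 - v*s*d1)/(d1*d2) := by
      intros d1 d2 s u v h1 h2
      field_simp
    rw [expand _ _ _ _ _ hd1.ne' hd2.ne', div_mul_eq_mul_div,
      div_eq_div_iff (mul_ne_zero hd1.ne' hd2.ne') (mul_ne_zero hd1.ne' hd2.ne')]
    field_simp
    ring
  have hneg : ∀ θ ∈ Set.Ioo (0:ℝ) Real.pi, Dval a r θ < 0 := by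
    intro θ hθ
    have hsin : 0 < Real.sin θ := Real.sin_pos_of_pos_of_lt_pi hθ.1 hθ.2
    rw [Dval, absq_neg, absq]
    have hd1 : (0:ℝ) < 1 - 2*(a/r)*Real.cos θ + (a/r)^2 := dpos _ _ hc10 hc1
    have hd2 : (0:ℝ) < 1 - 2*(a*r)*Real.cos θ + (a*r)^2 := dpos _ _ hc20 har
    have h1a : (0:ℝ) < 1 - a^2 := by nlinarith
    have hnum : 0 < a * (1 - a^2) * Real.sin θ := mul_pos (mul_pos ha0 h1a) hsin
    have hfr : 0 < a * (1 - a^2) * Real.sin θ / ((1 - 2*(a/r)*Real.cos θ + (a/r)^2) * (1 - 2*(a*r)*Real.cos θ + (a*r)^2)) :=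
      div_pos hnum (mul_pos hd1 hd2)
    have hrr : r⁻¹ - r < 0 := by
      have : r⁻¹ < 1 := by rw [inv_lt_one_iff₀]; right; exact hr
      linarith
    exact mul_neg_of_pos_of_neg hfr hrr
  refine ⟨fun θ hθ => ⟨key θ, hneg θ hθ⟩, ?_⟩
  apply strictAntiOn_of_deriv_neg (convex_Ioo 0 Real.pi)
  · exact fun x _ => ((key x).differentiableAt.continuousAt).continuousWithinAt
  · intro x hx
    rw [interior_Ioo] at hx
    rw [(key x).deriv]
    exact hneg x hx
end
end

section
/- For a, b ∈ ℝ with a not a nonpositive integer, there exists a constant C (depending on a and b only) such that for all u ∈ ℝ, |Γ(a + iu)/Γ(b − iu)| ≤ C (1 + |u|)^{a−b}. -/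
set_option maxHeartbeats 1000000

open Real Finset Filter
open scoped Nat

noncomputable section

namespace Stmt11Helpers


lemma log_div_le (m t : ℝ) (hm : 0 < m) (ht : 0 < t) : log m - log t ≤ (m - t)/t := by
  rw [← Real.log_div hm.ne' ht.ne']
  have := Real.log_le_sub_one_of_pos (div_pos hm ht)
  calc log (m/t) ≤ m/t - 1 := this
    _ = (m-t)/t := by field_simp

lemma log_taylor (p t m : ℝ) (hp : 0 < p) (hpt : p ≤ t) (hpm : p ≤ m) :
    log m - log t ≤ (m - t)/m + (m-t)^2/p^2 := by
  have ht : (0:ℝ) < t := lt_of_lt_of_le hp hpt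
  have hm : (0:ℝ) < m := lt_of_lt_of_le hp hpm
  have h1 := log_div_le m t hm ht
  have h2 : (m - t)/t ≤ (m-t)/m + (m-t)^2/p^2 := by
    have key : (m-t)/t - (m-t)/m = (m-t)^2/(t*m) := by field_simp
    have h3 : (m-t)^2/(t*m) ≤ (m-t)^2/p^2 := by
      apply div_le_div_of_nonneg_left (by positivity) (by positivity)
      nlinarith
    linarith
  linarith

lemma gm_lower (p q θ : ℝ) (hp : 0 < p) (h0 : 0 ≤ θ) (h1 : θ ≤ 1) (hpq : p ≤ q) :
    log ((1-θ)*p + θ*q) ≤ (1-θ)*log p + θ*log q + θ*(1-θ)*(q-p)^2/p^2 := by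
  obtain ⟨m, hmdef⟩ : ∃ m, m = (1-θ)*p + θ*q := ⟨_, rfl⟩
  rw [← hmdef]
  have hpm : p ≤ m := by rw [hmdef]; nlinarith
  have hm : (0:ℝ) < m := lt_of_lt_of_le hp hpm
  have hA := log_taylor p p m hp le_rfl hpm
  have hB := log_taylor p q m hp hpq hpm
  have hexp : (1-θ)*((m-p)/m + (m-p)^2/p^2) + θ*((m-q)/m + (m-q)^2/p^2)
      = θ*(1-θ)*(q-p)^2/p^2 := by
    subst hmdef; field_simp; ring
  have comb : (1-θ)*(log m - log p) + θ*(log m - log q) ≤ θ*(1-θ)*(q-p)^2/p^2 := by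
    rw [← hexp]
    exact add_le_add (mul_le_mul_of_nonneg_left hA (by linarith)) (mul_le_mul_of_nonneg_left hB h0)
  nlinarith [comb]

lemma gm_upper (p q θ : ℝ) (hp : 0 < p) (hq : 0 < q) (h0 : 0 ≤ θ) (h1 : θ ≤ 1) :
    (1-θ)*log p + θ*log q ≤ log ((1-θ)*p + θ*q) := by
  have := (strictConcaveOn_log_Ioi.concaveOn).2 (Set.mem_Ioi.mpr hp) (Set.mem_Ioi.mpr hq)
    (by linarith : (0:ℝ) ≤ 1-θ) h0 (by ring)
  simpa [smul_eq_mul] using this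

-- per-term estimate, both directions
lemma pt1 (s θ u : ℝ) (hs : 1 ≤ s) (h0 : 0 ≤ θ) (h1 : θ ≤ 1) :
    log ((s+θ)^2 + u^2) ≤ (1-θ) * log (s^2+u^2) + θ * log ((s+1)^2+u^2) + 3/s^2 := by
  have hs0 : (0:ℝ) < s := lt_of_lt_of_le one_pos hs
  have hp : (0:ℝ) < s^2+u^2 := by positivity
  have hq : (0:ℝ) < (s+1)^2+u^2 := by positivity
  have hr : (0:ℝ) < (s+θ)^2+u^2 := by positivity
  have hpq : s^2+u^2 ≤ (s+1)^2+u^2 := by nlinarith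
  have hrm : (s+θ)^2+u^2 ≤ (1-θ)*(s^2+u^2) + θ*((s+1)^2+u^2) := by nlinarith
  have h2 := gm_lower (s^2+u^2) ((s+1)^2+u^2) θ hp h0 h1 hpq
  have h3 : log ((s+θ)^2+u^2) ≤ log ((1-θ)*(s^2+u^2) + θ*((s+1)^2+u^2)) :=
    Real.log_le_log hr hrm
  have herr : θ*(1-θ)*(((s+1)^2+u^2)-(s^2+u^2))^2/(s^2+u^2)^2 ≤ 3/s^2 := by
    have hθq : θ*(1-θ) ≤ 1/4 := by nlinarith [sq_nonneg (θ-1/2)]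
    have e1 : (((s+1)^2+u^2)-(s^2+u^2))^2/(s^2+u^2)^2 ≤ 9/s^2 := by
      rw [div_le_div_iff₀ (by positivity) (by positivity)]
      nlinarith [mul_nonneg (mul_nonneg (sq_nonneg s) (by linarith : (0:ℝ) ≤ 5*s+1)) (by linarith : (0:ℝ) ≤ s-1), mul_nonneg (sq_nonneg s) (sq_nonneg u), sq_nonneg (u^2), sq_nonneg u]
    calc θ*(1-θ)*(((s+1)^2+u^2)-(s^2+u^2))^2/(s^2+u^2)^2
        = (θ*(1-θ))*((((s+1)^2+u^2)-(s^2+u^2))^2/(s^2+u^2)^2) := by ring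
      _ ≤ (1/4)*(9/s^2) := by
          apply mul_le_mul hθq e1 (by positivity) (by norm_num)
      _ = (9/4)/s^2 := by ring
      _ ≤ 3/s^2 := by gcongr <;> norm_num
  linarith
lemma pt2 (s θ u : ℝ) (hs : 1 ≤ s) (h0 : 0 ≤ θ) (h1 : θ ≤ 1) :
    (1-θ) * log (s^2+u^2) + θ * log ((s+1)^2+u^2) ≤ log ((s+θ)^2 + u^2) + 3/s^2 := by
  have hs0 : (0:ℝ) < s := lt_of_lt_of_le one_pos hs
  have hp : (0:ℝ) < s^2+u^2 := by positivity
  have hq : (0:ℝ) < (s+1)^2+u^2 := by positivity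
  have hr : (0:ℝ) < (s+θ)^2+u^2 := by positivity
  have h2 := gm_upper (s^2+u^2) ((s+1)^2+u^2) θ hp hq h0 h1
  have hmr : (1-θ)*(s^2+u^2) + θ*((s+1)^2+u^2) = ((s+θ)^2+u^2) + θ*(1-θ) := by ring
  have h3 : log ((1-θ)*(s^2+u^2) + θ*((s+1)^2+u^2)) - log ((s+θ)^2+u^2) ≤ θ*(1-θ)/((s+θ)^2+u^2) := by
    have := log_div_le ((1-θ)*(s^2+u^2) + θ*((s+1)^2+u^2)) ((s+θ)^2+u^2)
      (by nlinarith) hr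
    calc log ((1-θ)*(s^2+u^2) + θ*((s+1)^2+u^2)) - log ((s+θ)^2+u^2)
        ≤ ((1-θ)*(s^2+u^2) + θ*((s+1)^2+u^2) - ((s+θ)^2+u^2))/((s+θ)^2+u^2) := this
      _ = θ*(1-θ)/((s+θ)^2+u^2) := by rw [hmr]; ring_nf
  have h4 : θ*(1-θ)/((s+θ)^2+u^2) ≤ 3/s^2 := by
    apply div_le_div₀ (by positivity) (by nlinarith [sq_nonneg (θ-1/2)]) (by positivity)
    nlinarith [sq_nonneg u]
  linarith


lemma err_sum (x : ℝ) (hx : 1 ≤ x) (n : ℕ) :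
    ∑ j ∈ range n, 3/(x+j)^2 ≤ 6 := by
  have key : ∀ m : ℕ, ∑ j ∈ range m, 3/(x+j)^2 ≤ 6 - 6/((m:ℝ)+1) := by
    intro m
    induction m with
    | zero => simp
    | succ k ih =>
      rw [sum_range_succ]
      have hxk : (0:ℝ) < x + k := by positivity
      have step : 3/(x+k)^2 ≤ 6/(((k:ℝ)+1)*((k:ℝ)+2)) := by
        rw [div_le_div_iff₀ (by positivity) (by positivity)]
        nlinarith [sq_nonneg ((k:ℝ)), (Nat.cast_nonneg k : (0:ℝ) ≤ k)]
      have heq : 6/(((k:ℝ))+1) - 6/((k:ℝ)+2) = 6/(((k:ℝ)+1)*((k:ℝ)+2)) := by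
        field_simp; ring
      have hcast : ((k+1:ℕ):ℝ) + 1 = (k:ℝ)+2 := by push_cast; ring
      rw [hcast]
      linarith
  have h2 : (0:ℝ) ≤ 6/((n:ℝ)+1) := by positivity
  linarith [key n]


lemma telescope (f : ℕ → ℝ) (θ : ℝ) (n : ℕ) :
    ∑ j ∈ range (n+1), ((1-θ)*f j + θ*f (j+1))
      = (∑ j ∈ range (n+1), f j) + θ*(f (n+1) - f 0) := by
  have h : ∀ j ∈ range (n+1), (1-θ)*f j + θ*f (j+1) = f j + θ*(f (j+1) - f j) :=
    fun j _ => by ring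
  rw [Finset.sum_congr rfl h, Finset.sum_add_distrib, ← Finset.mul_sum,
    Finset.sum_range_sub (fun j => f j)]

lemma sum_est_upper (x θ u : ℝ) (hx : 1 ≤ x) (h0 : 0 ≤ θ) (h1 : θ ≤ 1) (n : ℕ) :
    ∑ j ∈ range (n+1), log ((x+θ+j)^2+u^2) ≤
      (∑ j ∈ range (n+1), log ((x+j)^2+u^2))
        + θ*(log ((x+((n+1:ℕ):ℝ))^2+u^2) - log (x^2+u^2)) + 6 := by
  have hstep : ∀ j ∈ range (n+1),
      log ((x+θ+j)^2+u^2) ≤ ((1-θ)*log ((x+j)^2+u^2)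
        + θ*log ((x+((j+1:ℕ):ℝ))^2+u^2)) + 3/(x+j)^2 := by
    intro j _
    have hs : 1 ≤ x + (j:ℝ) := le_add_of_le_of_nonneg hx (Nat.cast_nonneg j)
    have h := pt1 (x+j) θ u hs h0 h1
    have e1 : (x+(j:ℝ))+θ = x+θ+j := by ring
    have e2 : (x+(j:ℝ))+1 = x+((j+1:ℕ):ℝ) := by push_cast; ring
    rw [e1, e2] at h
    linarith
  have htel := telescope (fun j => log ((x+(j:ℝ))^2+u^2)) θ n
  have herr := err_sum x hx (n+1)
  have h0' : x + ((0:ℕ):ℝ) = x := by norm_num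
  calc ∑ j ∈ range (n+1), log ((x+θ+j)^2+u^2)
      ≤ ∑ j ∈ range (n+1), (((1-θ)*log ((x+j)^2+u^2)
          + θ*log ((x+((j+1:ℕ):ℝ))^2+u^2)) + 3/(x+j)^2) := sum_le_sum hstep
    _ = (∑ j ∈ range (n+1), ((1-θ)*log ((x+j)^2+u^2)
          + θ*log ((x+((j+1:ℕ):ℝ))^2+u^2))) + ∑ j ∈ range (n+1), 3/(x+j)^2 :=
        sum_add_distrib
    _ ≤ (∑ j ∈ range (n+1), log ((x+j)^2+u^2))
        + θ*(log ((x+((n+1:ℕ):ℝ))^2+u^2) - log ((x+((0:ℕ):ℝ))^2+u^2)) + 6 := by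
        push_cast at htel ⊢
        push_cast at herr
        linarith [htel, herr]
    _ = (∑ j ∈ range (n+1), log ((x+j)^2+u^2))
        + θ*(log ((x+((n+1:ℕ):ℝ))^2+u^2) - log (x^2+u^2)) + 6 := by rw [h0']

lemma sum_est_lower (x θ u : ℝ) (hx : 1 ≤ x) (h0 : 0 ≤ θ) (h1 : θ ≤ 1) (n : ℕ) :
    (∑ j ∈ range (n+1), log ((x+j)^2+u^2))
        + θ*(log ((x+((n+1:ℕ):ℝ))^2+u^2) - log (x^2+u^2)) - 6 ≤
      ∑ j ∈ range (n+1), log ((x+θ+j)^2+u^2) := by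
  have hstep : ∀ j ∈ range (n+1),
      ((1-θ)*log ((x+j)^2+u^2) + θ*log ((x+((j+1:ℕ):ℝ))^2+u^2)) - 3/(x+j)^2
        ≤ log ((x+θ+j)^2+u^2) := by
    intro j _
    have hs : 1 ≤ x + (j:ℝ) := le_add_of_le_of_nonneg hx (Nat.cast_nonneg j)
    have h := pt2 (x+j) θ u hs h0 h1
    have e1 : (x+(j:ℝ))+θ = x+θ+j := by ring
    have e2 : (x+(j:ℝ))+1 = x+((j+1:ℕ):ℝ) := by push_cast; ring
    rw [e1, e2] at h
    linarith
  have htel := telescope (fun j => log ((x+(j:ℝ))^2+u^2)) θ n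
  have herr := err_sum x hx (n+1)
  have h0' : x + ((0:ℕ):ℝ) = x := by norm_num
  have hsum := sum_le_sum hstep
  rw [Finset.sum_sub_distrib] at hsum
  push_cast at htel hsum herr ⊢
  simp only [add_zero] at htel
  linarith [htel, herr, hsum]


lemma abs_gammaSeq (x u : ℝ) (n : ℕ) (hn : 0 < n) :
    ‖Complex.GammaSeq ((x:ℂ) + u*Complex.I) n‖
      = (n:ℝ) ^ x * (n ! : ℝ) / ∏ j ∈ range (n+1), Real.sqrt ((x+j)^2+u^2) := by
  rw [Complex.GammaSeq, norm_div, norm_mul]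
  congr 1
  · congr 1
    · rw [show ((n:ℂ)) = (((n:ℝ)):ℂ) by push_cast; ring,
        Complex.norm_cpow_eq_rpow_re_of_pos (by positivity)]
      norm_num
    · exact Complex.norm_natCast _
  · rw [norm_prod]
    refine Finset.prod_congr rfl fun j _ => ?_
    rw [show (x:ℂ) + u*Complex.I + (j:ℕ) = (((x+j:ℝ)):ℂ) + ((u:ℝ):ℂ)*Complex.I by push_cast; ring]
    exact Complex.norm_add_mul_I _ _


lemma core (a b : ℝ) (ha1 : 1 ≤ a) (ha2 : a ≤ 2) (hb1 : 1 ≤ b) (hb2 : b ≤ 2) (u : ℝ) :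
    ‖Complex.Gamma ((a:ℂ) + u*Complex.I) / Complex.Gamma ((b:ℂ) + u*Complex.I)‖
      ≤ Real.exp 5 * (1+|u|) ^ (a-b) := by
  have hsbne : Complex.Gamma ((b:ℂ)+u*Complex.I) ≠ 0 := by
    apply Complex.Gamma_ne_zero_of_re_pos
    simp only [Complex.add_re, Complex.ofReal_re, Complex.mul_re, Complex.ofReal_im,
      Complex.I_re, Complex.I_im]
    norm_num; linarith
  have htend : Tendsto (fun n => ‖Complex.GammaSeq ((a:ℂ)+u*Complex.I) n
      / Complex.GammaSeq ((b:ℂ)+u*Complex.I) n‖) atTop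
      (nhds (‖Complex.Gamma ((a:ℂ) + u*Complex.I) / Complex.Gamma ((b:ℂ) + u*Complex.I)‖)) :=
    (continuous_norm.tendsto _).comp
      ((Complex.GammaSeq_tendsto_Gamma _).div (Complex.GammaSeq_tendsto_Gamma _) hsbne)
  refine le_of_tendsto htend ?_
  filter_upwards [eventually_ge_atTop (max 3 (⌈|u|⌉₊))] with n hn
  have hn3 : 3 ≤ n := le_trans (le_max_left _ _) hn
  have hnu : |u| ≤ (n:ℝ) := (Nat.le_ceil |u|).trans (Nat.cast_le.mpr (le_trans (le_max_right _ _) hn))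
  have hn0 : 0 < n := by omega
  have hnR : (1:ℝ) ≤ (n:ℝ) := by exact_mod_cast hn0
  have hn3R : (3:ℝ) ≤ (n:ℝ) := by exact_mod_cast hn3
  have hnR0 : (0:ℝ) < (n:ℝ) := by positivity
  simp only [norm_div, abs_gammaSeq a u n hn0, abs_gammaSeq b u n hn0]
  have hargpos : ∀ (x : ℝ), 1 ≤ x → ∀ j : ℕ, (0:ℝ) < (x+j)^2+u^2 := by
    intro x hx j
    have h1 : (0:ℝ) < x + j := by
      have : (0:ℝ) ≤ (j:ℝ) := Nat.cast_nonneg j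
      linarith
    positivity
  have hPa : (0:ℝ) < ∏ j ∈ range (n+1), Real.sqrt ((a+j)^2+u^2) :=
    Finset.prod_pos fun j _ => Real.sqrt_pos.mpr (hargpos a ha1 j)
  have hPb : (0:ℝ) < ∏ j ∈ range (n+1), Real.sqrt ((b+j)^2+u^2) :=
    Finset.prod_pos fun j _ => Real.sqrt_pos.mpr (hargpos b hb1 j)
  have hfacpos : (0:ℝ) < (n ! : ℝ) := by positivity
  have hnuma : (0:ℝ) < (n:ℝ) ^ a * (n ! : ℝ) := by positivity
  have hnumb : (0:ℝ) < (n:ℝ) ^ b * (n ! : ℝ) := by positivity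
  have hLHSpos : (0:ℝ) < ((n:ℝ) ^ a * (n ! : ℝ) / ∏ j ∈ range (n+1), Real.sqrt ((a+j)^2+u^2))
      / ((n:ℝ) ^ b * (n ! : ℝ) / ∏ j ∈ range (n+1), Real.sqrt ((b+j)^2+u^2)) :=
    div_pos (div_pos hnuma hPa) (div_pos hnumb hPb)
  have hupos : (0:ℝ) < 1 + |u| := by positivity
  rw [← Real.exp_log hLHSpos,
    show Real.exp 5 * (1+|u|) ^ (a-b) = Real.exp (5 + Real.log (1+|u|) * (a-b)) by
      rw [Real.exp_add, Real.rpow_def_of_pos hupos]]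
  apply Real.exp_le_exp.mpr
  have hlogP : ∀ x:ℝ, (hx : 1 ≤ x) → Real.log (∏ j ∈ range (n+1), Real.sqrt ((x+j)^2+u^2))
      = (∑ j ∈ range (n+1), Real.log ((x+j)^2+u^2))/2 := by
    intro x hx
    rw [Real.log_prod (fun j _ => ne_of_gt (Real.sqrt_pos.mpr (hargpos x hx j))),
      Finset.sum_div]
    exact Finset.sum_congr rfl fun j _ => by
      rw [Real.log_sqrt (hargpos x hx j).le]
  have hcalc : Real.log (((n:ℝ) ^ a * (n ! : ℝ) / ∏ j ∈ range (n+1), Real.sqrt ((a+j)^2+u^2))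
      / ((n:ℝ) ^ b * (n ! : ℝ) / ∏ j ∈ range (n+1), Real.sqrt ((b+j)^2+u^2)))
      = a*Real.log n - b*Real.log n
        + ((∑ j ∈ range (n+1), Real.log ((b+j)^2+u^2))/2
          - (∑ j ∈ range (n+1), Real.log ((a+j)^2+u^2))/2) := by
    rw [Real.log_div (ne_of_gt (div_pos hnuma hPa)) (ne_of_gt (div_pos hnumb hPb)),
      Real.log_div (ne_of_gt hnuma) hPa.ne', Real.log_div (ne_of_gt hnumb) hPb.ne',
      Real.log_mul (by positivity) hfacpos.ne', Real.log_mul (by positivity) hfacpos.ne',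
      Real.log_rpow hnR0, Real.log_rpow hnR0, hlogP a ha1, hlogP b hb1]
    ring
  rw [hcalc]
  have hlogn : (0:ℝ) ≤ Real.log n := Real.log_nonneg hnR
  have hlogu : (0:ℝ) ≤ Real.log (1+|u|) := Real.log_nonneg (by linarith [abs_nonneg u])
  have hexp2eq : Real.exp 2 = Real.exp 1 * Real.exp 1 := by rw [← Real.exp_add]; norm_num
  have hexp2 : (5:ℝ) ≤ Real.exp 2 := by nlinarith [Real.exp_one_gt_d9]
  have hlog2 : Real.log 2 ≤ 1 := by
    have := Real.log_le_sub_one_of_pos (by norm_num : (0:ℝ) < 2); linarith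
  have ha0 : (0:ℝ) < a^2+u^2 := by nlinarith [sq_nonneg u]
  have hb0 : (0:ℝ) < b^2+u^2 := by nlinarith [sq_nonneg u]
  rcases le_total a b with hab | hab
  · -- a ≤ b
    have hθ0 : (0:ℝ) ≤ b - a := by linarith
    have hθ1 : b - a ≤ 1 := by linarith
    have hsum := sum_est_upper a (b-a) u ha1 hθ0 hθ1 n
    rw [show a+(b-a) = b by ring] at hsum
    have hNpos := hargpos a ha1 (n+1)
    have hNbound : Real.log ((a+((n+1:ℕ):ℝ))^2+u^2) ≤ 2*Real.log n + 2 := by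
      have h1 : (a+((n+1:ℕ):ℝ))^2+u^2 ≤ Real.exp 2 * (n:ℝ)^2 := by
        have e1 : (a + (((n+1:ℕ)):ℝ))^2 ≤ 4*(n:ℝ)^2 := by push_cast; nlinarith
        have e2 : u^2 ≤ (n:ℝ)^2 := by nlinarith [sq_abs u, abs_nonneg u]
        have e3 : 5*(n:ℝ)^2 ≤ Real.exp 2 * (n:ℝ)^2 :=
          mul_le_mul_of_nonneg_right hexp2 (sq_nonneg _)
        linarith
      calc Real.log ((a+((n+1:ℕ):ℝ))^2+u^2) ≤ Real.log (Real.exp 2 * (n:ℝ)^2) :=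
          Real.log_le_log hNpos h1
        _ = 2*Real.log n + 2 := by
          rw [Real.log_mul (Real.exp_ne_zero 2) (by positivity), Real.log_exp, Real.log_pow]
          push_cast; ring
    have h0bound : 2*Real.log (1+|u|) - 1 ≤ Real.log (a^2+u^2) := by
      have harg : (1+|u|)^2/2 ≤ a^2+u^2 := by nlinarith [sq_abs u, sq_nonneg (1-|u|), abs_nonneg u]
      have h2 := Real.log_le_log (by positivity) harg
      rw [Real.log_div (by positivity) two_ne_zero, Real.log_pow] at h2
      push_cast at h2; linarith
    have hmul := mul_le_mul_of_nonneg_left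
      (show Real.log ((a+((n+1:ℕ):ℝ))^2+u^2) - Real.log (a^2+u^2)
        ≤ 2*Real.log n + 3 - 2*Real.log (1+|u|) by linarith) hθ0
    linarith [hsum, hmul]
  · -- b ≤ a
    have hθ0 : (0:ℝ) ≤ a - b := by linarith
    have hθ1 : a - b ≤ 1 := by linarith
    have hsum := sum_est_lower b (a-b) u hb1 hθ0 hθ1 n
    rw [show b+(a-b) = a by ring] at hsum
    have hNpos := hargpos b hb1 (n+1)
    have hNbound : 2*Real.log n ≤ Real.log ((b+((n+1:ℕ):ℝ))^2+u^2) := by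
      push_cast
      have h1 : (n:ℝ)^2 ≤ (b+((n:ℝ)+1))^2+u^2 := by nlinarith [sq_nonneg u]
      have h2 := Real.log_le_log (by positivity) h1
      rw [Real.log_pow] at h2; push_cast at h2; linarith
    have h0bound : Real.log (b^2+u^2) ≤ 2*Real.log (1+|u|) + 2 := by
      have harg : b^2+u^2 ≤ Real.exp 2 * (1+|u|)^2 := by
        have e1 : b^2+u^2 ≤ 5*(1+|u|)^2 := by nlinarith [sq_abs u, abs_nonneg u]
        have e3 : 5*(1+|u|)^2 ≤ Real.exp 2 * (1+|u|)^2 :=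
          mul_le_mul_of_nonneg_right hexp2 (sq_nonneg _)
        linarith
      have h2 := Real.log_le_log hb0 harg
      rw [Real.log_mul (Real.exp_ne_zero 2) (by positivity), Real.log_exp, Real.log_pow] at h2
      push_cast at h2; linarith
    have hmul := mul_le_mul_of_nonneg_left
      (show Real.log (b^2+u^2) - Real.log ((b+((n+1:ℕ):ℝ))^2+u^2)
        ≤ 2*Real.log (1+|u|) + 2 - 2*Real.log n by linarith) hθ0
    linarith [hsum, hmul]



def Pred (a b : ℝ) : Prop := ∃ C : ℝ, 0 < C ∧ ∀ u : ℝ,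
  ‖Complex.Gamma ((a:ℂ) + (u:ℂ)*Complex.I) / Complex.Gamma ((b:ℂ) + (u:ℂ)*Complex.I)‖
    ≤ C * (1+|u|) ^ (a-b)

lemma z_ne (x u : ℝ) (hx : x ≠ 0) : ((x:ℂ) + u*Complex.I) ≠ 0 := by
  intro h
  apply hx
  have := congrArg Complex.re h
  simpa using this

lemma abs_z_le (x u : ℝ) : ‖(x:ℂ)+u*Complex.I‖ ≤ (1+|x|)*(1+|u|) := by
  have h1 : ‖(x:ℂ)+u*Complex.I‖ ≤ |x| + |u| := by
    refine (norm_add_le _ _).trans ?_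
    rw [norm_mul, Complex.norm_I, Complex.norm_real, Complex.norm_real, mul_one, Real.norm_eq_abs, Real.norm_eq_abs]
  nlinarith [abs_nonneg x, abs_nonneg u]

lemma abs_z_lb (x u : ℝ) (hx : x ≠ 0) :
    min |x| 1 * (1+|u|) ≤ 2 * ‖(x:ℂ)+u*Complex.I‖ := by
  have hsq : (‖(x:ℂ)+u*Complex.I‖)^2 = x^2+u^2 := by
    rw [Complex.sq_norm, Complex.normSq_add_mul_I]
  have habs : 0 ≤ ‖(x:ℂ)+u*Complex.I‖ := norm_nonneg _
  have hmin : 0 < min |x| 1 := lt_min (abs_pos.mpr hx) one_pos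
  by_contra hcon
  push_neg at hcon
  have h1 : (min |x| 1 * (1+|u|))^2 ≤ 4*(x^2+u^2) := by
    have hm1 : min |x| 1 ≤ |x| := min_le_left _ _
    have hm2 : min |x| 1 ≤ 1 := min_le_right _ _
    nlinarith [sq_abs x, abs_nonneg u, abs_nonneg x, sq_abs u, hmin.le,
      mul_le_mul hm1 hm1 hmin.le (abs_nonneg x), mul_le_mul hm2 hm2 hmin.le zero_le_one,
      sq_nonneg (|x| - |u|)]
  nlinarith [mul_pos (mul_pos hmin (by positivity : (0:ℝ) < 1 + |u|)) (mul_pos hmin (by positivity : (0:ℝ) < 1 + |u|))]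

lemma up_a (a b : ℝ) (ha : 0 < a) (h : Pred a b) : Pred (a+1) b := by
  obtain ⟨C, hC, hb⟩ := h
  refine ⟨C*(1+|a|), by positivity, fun u => ?_⟩
  have hupos : (0:ℝ) < 1 + |u| := by positivity
  have keyeq : Complex.Gamma (((a+1:ℝ):ℂ) + u*Complex.I)
      = ((a:ℂ)+u*Complex.I) * Complex.Gamma ((a:ℂ)+u*Complex.I) := by
    rw [show ((a+1:ℝ):ℂ) + u*Complex.I = ((a:ℂ)+u*Complex.I) + 1 by push_cast; ring,
      Complex.Gamma_add_one _ (z_ne a u ha.ne')]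
  calc ‖Complex.Gamma (((a+1:ℝ):ℂ) + u*Complex.I)
        / Complex.Gamma ((b:ℂ) + u*Complex.I)‖
      = ‖(a:ℂ)+u*Complex.I‖
        * ‖Complex.Gamma ((a:ℂ)+u*Complex.I) / Complex.Gamma ((b:ℂ)+u*Complex.I)‖ := by
        rw [keyeq, mul_div_assoc, norm_mul]
    _ ≤ ((1+|a|)*(1+|u|)) * (C * (1+|u|)^(a-b)) := by
        apply mul_le_mul (abs_z_le a u) (hb u) (norm_nonneg _) (by positivity)
    _ = (C*(1+|a|)) * (1+|u|)^((a+1)-b) := by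
        rw [show (a+1)-b = (a-b)+1 by ring, Real.rpow_add hupos, Real.rpow_one]; ring

lemma down_a (a b : ℝ) (ha : a ≠ 0) (h : Pred (a+1) b) : Pred a b := by
  obtain ⟨C, hC, hb⟩ := h
  have hmin : 0 < min |a| 1 := lt_min (abs_pos.mpr ha) one_pos
  refine ⟨C*2/min |a| 1, by positivity, fun u => ?_⟩
  have hupos : (0:ℝ) < 1 + |u| := by positivity
  have hz := z_ne a u ha
  have hzpos : 0 < ‖(a:ℂ)+u*Complex.I‖ := norm_pos_iff.mpr hz
  have keyeq : Complex.Gamma ((a:ℂ)+u*Complex.I)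
      = Complex.Gamma (((a+1:ℝ):ℂ)+u*Complex.I) / ((a:ℂ)+u*Complex.I) := by
    rw [show ((a+1:ℝ):ℂ) + u*Complex.I = ((a:ℂ)+u*Complex.I) + 1 by push_cast; ring,
      Complex.Gamma_add_one _ hz, mul_div_cancel_left₀ _ hz]
  rw [keyeq, div_right_comm, norm_div]
  rw [div_le_iff₀ hzpos]
  calc ‖Complex.Gamma (((a+1:ℝ):ℂ)+u*Complex.I) / Complex.Gamma ((b:ℂ)+u*Complex.I)‖
      ≤ C * (1+|u|)^((a+1)-b) := hb u
    _ = (C * (1+|u|)^(a-b)) * (1+|u|) := by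
        rw [show (a+1)-b = (a-b)+1 by ring, Real.rpow_add hupos, Real.rpow_one]; ring
    _ = (C*2/min |a| 1 * (1+|u|)^(a-b)) * (min |a| 1 * (1+|u|) / 2) := by
        field_simp
    _ ≤ (C*2/min |a| 1 * (1+|u|)^(a-b)) * ‖(a:ℂ)+u*Complex.I‖ := by
        apply mul_le_mul_of_nonneg_left _ (by positivity)
        linarith [abs_z_lb a u ha]

lemma up_b (a b : ℝ) (hb : 0 < b) (h : Pred a b) : Pred a (b+1) := by
  obtain ⟨C, hC, hball⟩ := h
  have hmin : 0 < min |b| 1 := lt_min (abs_pos.mpr hb.ne') one_pos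
  refine ⟨C*2/min |b| 1, by positivity, fun u => ?_⟩
  have hupos : (0:ℝ) < 1 + |u| := by positivity
  have hz := z_ne b u hb.ne'
  have hzpos : 0 < ‖(b:ℂ)+u*Complex.I‖ := norm_pos_iff.mpr hz
  have keyeq : Complex.Gamma (((b+1:ℝ):ℂ) + u*Complex.I)
      = ((b:ℂ)+u*Complex.I) * Complex.Gamma ((b:ℂ)+u*Complex.I) := by
    rw [show ((b+1:ℝ):ℂ) + u*Complex.I = ((b:ℂ)+u*Complex.I) + 1 by push_cast; ring,
      Complex.Gamma_add_one _ hz]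
  rw [keyeq, div_mul_eq_div_div_swap, norm_div]
  rw [div_le_iff₀ hzpos]
  calc ‖Complex.Gamma ((a:ℂ)+u*Complex.I) / Complex.Gamma ((b:ℂ)+u*Complex.I)‖
      ≤ C * (1+|u|)^(a-b) := hball u
    _ = (C * (1+|u|)^(a-(b+1))) * (1+|u|) := by
        rw [show a-b = (a-(b+1))+1 by ring, Real.rpow_add hupos, Real.rpow_one]; ring
    _ = (C*2/min |b| 1 * (1+|u|)^(a-(b+1))) * (min |b| 1 * (1+|u|) / 2) := by
        field_simp
    _ ≤ (C*2/min |b| 1 * (1+|u|)^(a-(b+1))) * ‖(b:ℂ)+u*Complex.I‖ := by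
        apply mul_le_mul_of_nonneg_left _ (by positivity)
        linarith [abs_z_lb b u hb.ne']

lemma down_b (a b : ℝ) (hb : ∀ m:ℕ, b ≠ -(m:ℝ)) (h : Pred a (b+1)) : Pred a b := by
  obtain ⟨C, hC, hball⟩ := h
  have hbne : b ≠ 0 := by simpa using hb 0
  refine ⟨C*(1+|b|), by positivity, fun u => ?_⟩
  have hupos : (0:ℝ) < 1 + |u| := by positivity
  have hz := z_ne b u hbne
  have hGb : Complex.Gamma ((b:ℂ)+u*Complex.I) ≠ 0 := by
    apply Complex.Gamma_ne_zero
    intro m hm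
    apply hb m
    have hre := congrArg Complex.re hm
    simpa using hre
  have keyeq : Complex.Gamma (((b+1:ℝ):ℂ) + u*Complex.I)
      = ((b:ℂ)+u*Complex.I) * Complex.Gamma ((b:ℂ)+u*Complex.I) := by
    rw [show ((b+1:ℝ):ℂ) + u*Complex.I = ((b:ℂ)+u*Complex.I) + 1 by push_cast; ring,
      Complex.Gamma_add_one _ hz]
  have keyeq2 : Complex.Gamma ((a:ℂ)+u*Complex.I) / Complex.Gamma ((b:ℂ)+u*Complex.I)
      = ((b:ℂ)+u*Complex.I) * (Complex.Gamma ((a:ℂ)+u*Complex.I)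
          / Complex.Gamma (((b+1:ℝ):ℂ)+u*Complex.I)) := by
    rw [keyeq]
    field_simp
  rw [keyeq2, norm_mul]
  calc ‖(b:ℂ)+u*Complex.I‖ * ‖Complex.Gamma ((a:ℂ)+u*Complex.I)
        / Complex.Gamma (((b+1:ℝ):ℂ)+u*Complex.I)‖
      ≤ ((1+|b|)*(1+|u|)) * (C * (1+|u|)^(a-(b+1))) := by
        apply mul_le_mul (abs_z_le b u) (hball u) (norm_nonneg _) (by positivity)
    _ = (C*(1+|b|)) * (1+|u|)^(a-b) := by
        rw [show a-b = (a-(b+1))+1 by ring, Real.rpow_add hupos, Real.rpow_one]; ring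

lemma up_a_iter (b : ℝ) : ∀ k : ℕ, ∀ a : ℝ, 0 < a → Pred a b → Pred (a+(k:ℝ)) b := by
  intro k
  induction k with
  | zero => intro a _ h; simpa using h
  | succ k ih =>
    intro a ha h
    have h1 := ih a ha h
    have hk : (0:ℝ) ≤ (k:ℝ) := Nat.cast_nonneg k
    have h2 := up_a (a+(k:ℝ)) b (by linarith) h1
    rw [show a + ((k+1:ℕ):ℝ) = (a+(k:ℝ))+1 by push_cast; ring]
    exact h2

lemma down_a_iter (b : ℝ) : ∀ k : ℕ, ∀ a : ℝ, (∀ m:ℤ, m ≤ 0 → a ≠ (m:ℝ)) →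
    Pred (a+(k:ℝ)) b → Pred a b := by
  intro k
  induction k with
  | zero => intro a _ h; simpa using h
  | succ k ih =>
    intro a ha h
    have hane : a ≠ 0 := by
      intro hc; exact ha 0 le_rfl (by simpa using hc)
    apply down_a a b hane
    apply ih (a+1)
    · intro m hm hc
      apply ha (m-1) (by omega)
      push_cast at hc ⊢
      linarith
    · rw [show (a+1) + (k:ℝ) = a + ((k+1:ℕ):ℝ) by push_cast; ring]
      exact h

lemma up_b_iter (a : ℝ) : ∀ k : ℕ, ∀ b : ℝ, 0 < b → Pred a b → Pred a (b+(k:ℝ)) := by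
  intro k
  induction k with
  | zero => intro b _ h; simpa using h
  | succ k ih =>
    intro b hb h
    have h1 := ih b hb h
    have hk : (0:ℝ) ≤ (k:ℝ) := Nat.cast_nonneg k
    have h2 := up_b a (b+(k:ℝ)) (by linarith) h1
    rw [show b + ((k+1:ℕ):ℝ) = (b+(k:ℝ))+1 by push_cast; ring]
    exact h2

lemma down_b_iter (a : ℝ) : ∀ k : ℕ, ∀ b : ℝ, (∀ m:ℤ, m ≤ 0 → b ≠ (m:ℝ)) →
    Pred a (b+(k:ℝ)) → Pred a b := by
  intro k
  induction k with
  | zero => intro b _ h; simpa using h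
  | succ k ih =>
    intro b hb h
    have hbne : ∀ m:ℕ, b ≠ -(m:ℝ) := by
      intro m hc
      exact hb (-(m:ℤ)) (by omega) (by push_cast at hc ⊢; linarith)
    apply down_b a b hbne
    apply ih (b+1)
    · intro m hm hc
      apply hb (m-1) (by omega)
      push_cast at hc ⊢
      linarith
    · rw [show (b+1) + (k:ℝ) = b + ((k+1:ℕ):ℝ) by push_cast; ring]
      exact h

lemma transport_a (b : ℝ) (a : ℝ) (ha : ∀ m:ℤ, m ≤ 0 → a ≠ (m:ℝ))
    (h : ∀ a₀:ℝ, 1 ≤ a₀ → a₀ ≤ 2 → Pred a₀ b) : Pred a b := by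
  set k : ℤ := ⌈a⌉ - 2 with hk
  have hkR : (k:ℝ) = ((⌈a⌉:ℤ):ℝ) - 2 := by rw [hk]; push_cast; ring
  have h1 : a - (k:ℝ) ≤ 2 := by rw [hkR]; linarith [Int.le_ceil a]
  have h2 : 1 ≤ a - (k:ℝ) := by rw [hkR]; linarith [Int.ceil_lt_add_one a]
  have hbase := h (a - (k:ℝ)) h2 h1
  rcases le_or_gt 0 k with hk0 | hk0
  · have hcast : ((k.toNat:ℕ):ℝ) = (k:ℝ) := by
      exact_mod_cast congrArg (Int.cast : ℤ→ℝ) (Int.toNat_of_nonneg hk0)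
    have hthis := up_a_iter b k.toNat (a - (k:ℝ)) (by linarith) hbase
    rw [hcast, show a - (k:ℝ) + (k:ℝ) = a by ring] at hthis
    exact hthis
  · have hk0' : (0:ℤ) ≤ -k := by omega
    have hcast : (((-k).toNat:ℕ):ℝ) = -(k:ℝ) := by
      exact_mod_cast congrArg (Int.cast : ℤ→ℝ) (Int.toNat_of_nonneg hk0')
    apply down_a_iter b (-k).toNat a ha
    rw [hcast, show a + -(k:ℝ) = a - (k:ℝ) by ring]
    exact hbase

lemma transport_b (a : ℝ) (b : ℝ) (hb : ∀ m:ℤ, m ≤ 0 → b ≠ (m:ℝ))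
    (h : ∀ b₀:ℝ, 1 ≤ b₀ → b₀ ≤ 2 → Pred a b₀) : Pred a b := by
  set k : ℤ := ⌈b⌉ - 2 with hk
  have hkR : (k:ℝ) = ((⌈b⌉:ℤ):ℝ) - 2 := by rw [hk]; push_cast; ring
  have h1 : b - (k:ℝ) ≤ 2 := by rw [hkR]; linarith [Int.le_ceil b]
  have h2 : 1 ≤ b - (k:ℝ) := by rw [hkR]; linarith [Int.ceil_lt_add_one b]
  have hbase := h (b - (k:ℝ)) h2 h1
  rcases le_or_gt 0 k with hk0 | hk0
  · have hcast : ((k.toNat:ℕ):ℝ) = (k:ℝ) := by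
      exact_mod_cast congrArg (Int.cast : ℤ→ℝ) (Int.toNat_of_nonneg hk0)
    have hthis := up_b_iter a k.toNat (b - (k:ℝ)) (by linarith) hbase
    rw [hcast, show b - (k:ℝ) + (k:ℝ) = b by ring] at hthis
    exact hthis
  · have hk0' : (0:ℤ) ≤ -k := by omega
    have hcast : (((-k).toNat:ℕ):ℝ) = -(k:ℝ) := by
      exact_mod_cast congrArg (Int.cast : ℤ→ℝ) (Int.toNat_of_nonneg hk0')
    apply down_b_iter a (-k).toNat b hb
    rw [hcast, show b + -(k:ℝ) = b - (k:ℝ) by ring]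
    exact hbase

lemma pred_all (a b : ℝ) (ha : ∀ m:ℤ, m ≤ 0 → a ≠ (m:ℝ)) (hb : ∀ m:ℤ, m ≤ 0 → b ≠ (m:ℝ)) :
    Pred a b := by
  apply transport_a b a ha
  intro a₀ ha1 ha2
  apply transport_b a₀ b hb
  intro b₀ hb1 hb2
  exact ⟨Real.exp 5, Real.exp_pos 5, fun u => core a₀ b₀ ha1 ha2 hb1 hb2 u⟩

end Stmt11Helpers

/-- Polynomial bound on ratios of Gamma functions along vertical lines: for `a, b ∈ ℝ` not
nonpositive integers, there is a constant `C > 0` such that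
`|Γ(a+iu)/Γ(b−iu)| ≤ C (1+|u|)^{a−b}` for all real `u`. -/
theorem stmt11 (a b : ℝ) (ha : ∀ m : ℤ, m ≤ 0 → a ≠ (m : ℝ))
    (hb : ∀ m : ℤ, m ≤ 0 → b ≠ (m : ℝ)) :
    ∃ C : ℝ, 0 < C ∧ ∀ u : ℝ,
      ‖Complex.Gamma ((a : ℂ) + (u : ℂ) * Complex.I) /
          Complex.Gamma ((b : ℂ) - (u : ℂ) * Complex.I)‖ ≤
        C * (1 + |u|) ^ (a - b) := by
  obtain ⟨C, hC, h⟩ := Stmt11Helpers.pred_all a b ha hb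
  refine ⟨C, hC, fun u => ?_⟩
  have habs : ‖Complex.Gamma ((b:ℂ) - (u:ℂ)*Complex.I)‖
      = ‖Complex.Gamma ((b:ℂ) + (u:ℂ)*Complex.I)‖ := by
    have hconj : ((b:ℂ) - (u:ℂ)*Complex.I) = (starRingEnd ℂ) ((b:ℂ) + (u:ℂ)*Complex.I) := by
      simp [Complex.ext_iff]
    rw [hconj, Complex.Gamma_conj, Complex.norm_conj]
  rw [norm_div, habs, ← norm_div]
  exact h u
end
end

section
/- Let ε > 0, q = e^{−ε}, and a ∈ [0, π/ε]. Then |Γ_q(1 + ia) / Γ_{q²}(1 + ia)| ≤ 1. -/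
noncomputable section

/-- infinite q-Pochhammer symbol `(z;q)_∞ = ∏_{i≥0} (1 - z qⁱ)` (complex argument) -/
def qPochInfC (z : ℂ) (q : ℝ) : ℂ := ∏' i : ℕ, (1 - z * (q : ℂ) ^ i)

/-- the q-Gamma function `Γ_q(X) = (1−q)^{1−X} (q;q)_∞ / (q^X;q)_∞` -/
def qGammaC (q : ℝ) (X : ℂ) : ℂ :=
  ((1 - q : ℝ) : ℂ) ^ ((1 : ℂ) - X) * qPochInfC (q : ℂ) q / qPochInfC ((q : ℂ) ^ X) q

namespace QPochAux

lemma abs_pow_q {q : ℝ} (hq0 : 0 ≤ q) (i : ℕ) :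
    ‖(q : ℂ) ^ i‖ = q ^ i := by
  rw [norm_pow, Complex.norm_real, Real.norm_eq_abs, abs_of_nonneg hq0]

lemma term_ne {q : ℝ} {z : ℂ} (hq0 : 0 ≤ q) (hq1 : q ≤ 1) (hz : ‖z‖ < 1)
    (i : ℕ) : (1 : ℂ) - z * (q : ℂ) ^ i ≠ 0 := by
  intro h
  have h1 : z * (q : ℂ) ^ i = 1 := by linear_combination -h
  have h2 : ‖z * (q : ℂ) ^ i‖ = 1 := by rw [h1]; simp
  have h3 : ‖z * (q : ℂ) ^ i‖ < 1 := by
    rw [norm_mul, abs_pow_q hq0]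
    calc ‖z‖ * q ^ i ≤ ‖z‖ * 1 := by
          apply mul_le_mul_of_nonneg_left (pow_le_one₀ hq0 hq1) (norm_nonneg z)
      _ < 1 := by simpa using hz
  rw [h2] at h3; exact lt_irrefl _ h3

lemma summable_log {q : ℝ} {z : ℂ} (hq0 : 0 ≤ q) (hq1 : q < 1) (hz : ‖z‖ < 1) :
    Summable (fun i : ℕ => Complex.log (1 - z * (q : ℂ) ^ i)) := by
  apply Summable.of_norm_bounded_eventually_nat
    (g := fun i => 3 / 2 * (‖z‖ * q ^ i))
  · exact (summable_geometric_of_lt_one hq0 hq1).mul_left _ |>.mul_left _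
  · have htend : Filter.Tendsto (fun i : ℕ => ‖z‖ * q ^ i) Filter.atTop (nhds 0) := by
      simpa using (tendsto_pow_atTop_nhds_zero_of_lt_one hq0 hq1).const_mul (‖z‖)
    filter_upwards [htend.eventually_le_const (by norm_num : (0:ℝ) < 1/2)] with i hi
    have habs : ‖-(z * (q : ℂ) ^ i)‖ = ‖z‖ * q ^ i := by
      rw [norm_neg, norm_mul, abs_pow_q hq0]
    have h12 : ‖-(z * (q : ℂ) ^ i)‖ ≤ 1 / 2 := by
      rw [habs]; exact hi
    have := Complex.norm_log_one_add_half_le_self h12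
    have he : (1 : ℂ) + -(z * (q : ℂ) ^ i) = 1 - z * (q : ℂ) ^ i := by ring
    rw [he] at this
    calc ‖Complex.log (1 - z * (q : ℂ) ^ i)‖
        ≤ 3 / 2 * ‖-(z * (q : ℂ) ^ i)‖ := this
      _ = 3 / 2 * (‖z‖ * q ^ i) := by rw [habs]

lemma hasProd {q : ℝ} {z : ℂ} (hq0 : 0 ≤ q) (hq1 : q < 1) (hz : ‖z‖ < 1) :
    HasProd (fun i : ℕ => 1 - z * (q : ℂ) ^ i)
      (Complex.exp (∑' i : ℕ, Complex.log (1 - z * (q : ℂ) ^ i))) := by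
  have h := (summable_log hq0 hq1 hz).hasSum.cexp
  have heq : (Complex.exp ∘ fun i : ℕ => Complex.log (1 - z * (q : ℂ) ^ i)) =
      fun i : ℕ => 1 - z * (q : ℂ) ^ i :=
    funext fun i => Complex.exp_log (term_ne hq0 hq1.le hz i)
  rwa [heq] at h

lemma multipliable {q : ℝ} {z : ℂ} (hq0 : 0 ≤ q) (hq1 : q < 1) (hz : ‖z‖ < 1) :
    Multipliable (fun i : ℕ => 1 - z * (q : ℂ) ^ i) :=
  ⟨_, hasProd hq0 hq1 hz⟩

lemma poch_ne_zero {q : ℝ} {z : ℂ} (hq0 : 0 ≤ q) (hq1 : q < 1) (hz : ‖z‖ < 1) :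
    qPochInfC z q ≠ 0 := by
  rw [qPochInfC, (hasProd hq0 hq1 hz).tprod_eq]
  exact Complex.exp_ne_zero _

lemma multipliable_plus {q : ℝ} {z : ℂ} (hq0 : 0 ≤ q) (hq1 : q < 1) (hz : ‖z‖ < 1) :
    Multipliable (fun i : ℕ => 1 + z * (q : ℂ) ^ i) := by
  have := multipliable (z := -z) hq0 hq1 (by simpa using hz)
  apply this.congr
  intro i; ring

lemma plus_ne_zero {q : ℝ} {z : ℂ} (hq0 : 0 ≤ q) (hq1 : q < 1) (hz : ‖z‖ < 1) :
    (∏' i : ℕ, (1 + z * (q : ℂ) ^ i)) ≠ 0 := by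
  have h := poch_ne_zero (z := -z) hq0 hq1 (by simpa using hz)
  rw [qPochInfC] at h
  have he : (fun i : ℕ => 1 - -z * (q : ℂ) ^ i) = fun i : ℕ => 1 + z * (q : ℂ) ^ i := by
    funext i; ring
  rwa [he] at h

/-- the splitting identity `(z²;q²)_∞ = (z;q)_∞ · ∏(1+z qⁱ)` -/
lemma split {q : ℝ} {z : ℂ} (hq0 : 0 ≤ q) (hq1 : q < 1) (hz : ‖z‖ < 1) :
    qPochInfC (z ^ 2) (q ^ 2) = qPochInfC z q * ∏' i : ℕ, (1 + z * (q : ℂ) ^ i) := by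
  rw [qPochInfC, qPochInfC,
    ← Multipliable.tprod_mul (multipliable hq0 hq1 hz) (multipliable_plus hq0 hq1 hz)]
  congr 1
  funext i
  push_cast
  ring

end QPochAux

open QPochAux in
/-- For `q = e^{−ε}` and `a ∈ [0, π/ε]`, `|Γ_q(1+ia)/Γ_{q²}(1+ia)| ≤ 1`. -/
theorem stmt14 (ε : ℝ) (hε : 0 < ε) (q : ℝ) (hq : q = Real.exp (-ε)) (a : ℝ)
    (ha : a ∈ Set.Icc 0 (Real.pi / ε)) :
    ‖qGammaC q (1 + (a : ℂ) * Complex.I) /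
        qGammaC (q ^ 2) (1 + (a : ℂ) * Complex.I)‖ ≤ 1 := by
  have hq0 : 0 < q := hq ▸ Real.exp_pos _
  have hq1 : q < 1 := by
    rw [hq]; exact Real.exp_lt_one_iff.mpr (by linarith)
  have hq20 : 0 ≤ q ^ 2 := by positivity
  have hq21 : q ^ 2 < 1 := by nlinarith
  set X : ℂ := 1 + (a : ℂ) * Complex.I with hX
  have hXre : X.re = 1 := by simp [hX]
  -- w := q ^ X
  set w : ℂ := (q : ℂ) ^ X with hw
  have habsw : ‖w‖ = q := by
    rw [hw, Complex.norm_cpow_eq_rpow_re_of_pos hq0, hXre, Real.rpow_one]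
  have hwlt : ‖w‖ < 1 := by rw [habsw]; exact hq1
  have hqlt : ‖(q : ℂ)‖ < 1 := by
    rw [Complex.norm_real, Real.norm_eq_abs, abs_of_nonneg hq0.le]; exact hq1
  -- (q²)^X = w²
  have hcast2 : ((q ^ 2 : ℝ) : ℂ) = (q : ℂ) ^ 2 := by push_cast; ring
  have hw2 : ((q ^ 2 : ℝ) : ℂ) ^ X = w ^ 2 := by
    have hlog2 : Complex.log ((q ^ 2 : ℝ) : ℂ) = 2 * Complex.log ((q : ℂ)) := by
      rw [← Complex.ofReal_log hq0.le, ← Complex.ofReal_log (by positivity : (0:ℝ) ≤ q ^ 2),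
        Real.log_pow]
      push_cast; ring
    have h1 : ((q ^ 2 : ℝ) : ℂ) ≠ 0 := by
      simp only [ne_eq, Complex.ofReal_eq_zero]; positivity
    have h2 : (q : ℂ) ≠ 0 := by
      simp only [ne_eq, Complex.ofReal_eq_zero]; exact hq0.ne'
    rw [Complex.cpow_def_of_ne_zero h1, hlog2, hw, Complex.cpow_def_of_ne_zero h2, sq,
      ← Complex.exp_add]
    ring_nf
  -- notation for the pieces
  set P : ℂ := qPochInfC (q : ℂ) q with hP
  set D : ℂ := qPochInfC w q with hD
  set E : ℂ := ∏' i : ℕ, (1 + w * (q : ℂ) ^ i) with hE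
  set F : ℂ := ∏' i : ℕ, (1 + (q : ℂ) * (q : ℂ) ^ i) with hF
  have hP2 : qPochInfC ((q ^ 2 : ℝ) : ℂ) (q ^ 2) = P * F := by
    rw [hcast2]
    exact split hq0.le hq1 hqlt
  have hD2 : qPochInfC (((q ^ 2 : ℝ) : ℂ) ^ X) (q ^ 2) = D * E := by
    rw [hw2]
    exact split hq0.le hq1 hwlt
  have hPne : P ≠ 0 := poch_ne_zero hq0.le hq1 hqlt
  have hDne : D ≠ 0 := poch_ne_zero hq0.le hq1 hwlt
  have hFne : F ≠ 0 := plus_ne_zero hq0.le hq1 hqlt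
  have hEne : E ≠ 0 := plus_ne_zero hq0.le hq1 hwlt
  have hu1ne : ((1 - q : ℝ) : ℂ) ^ ((1 : ℂ) - X) ≠ 0 := by
    intro h
    rw [Complex.cpow_eq_zero_iff] at h
    have := h.1
    simp only [Complex.ofReal_eq_zero] at this
    linarith
  have hu2ne : ((1 - q ^ 2 : ℝ) : ℂ) ^ ((1 : ℂ) - X) ≠ 0 := by
    intro h
    rw [Complex.cpow_eq_zero_iff] at h
    have := h.1
    simp only [Complex.ofReal_eq_zero] at this
    linarith
  -- rewrite the ratio
  have hratio : qGammaC q X / qGammaC (q ^ 2) X =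
      (((1 - q : ℝ) : ℂ) ^ ((1 : ℂ) - X) / ((1 - q ^ 2 : ℝ) : ℂ) ^ ((1 : ℂ) - X)) * (E / F) := by
    rw [qGammaC, qGammaC, hP2, hD2, ← hP, ← hD]
    field_simp
  rw [hratio, norm_mul, norm_div, norm_div]
  -- the cpow quotient has modulus 1
  have habs1 : ‖((1 - q : ℝ) : ℂ) ^ ((1 : ℂ) - X)‖ = 1 := by
    rw [Complex.norm_cpow_eq_rpow_re_of_pos (by linarith)]
    have : ((1 : ℂ) - X).re = 0 := by simp [hX]
    rw [this, Real.rpow_zero]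
  have habs2 : ‖((1 - q ^ 2 : ℝ) : ℂ) ^ ((1 : ℂ) - X)‖ = 1 := by
    rw [Complex.norm_cpow_eq_rpow_re_of_pos (by linarith)]
    have : ((1 : ℂ) - X).re = 0 := by simp [hX]
    rw [this, Real.rpow_zero]
  rw [habs1, habs2]
  -- reduce to |E| ≤ |F|
  have hMF : Multipliable (fun i : ℕ => 1 + (q : ℂ) * (q : ℂ) ^ i) :=
    multipliable_plus hq0.le hq1 hqlt
  have hME : Multipliable (fun i : ℕ => 1 + w * (q : ℂ) ^ i) :=
    multipliable_plus hq0.le hq1 hwlt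
  have hkey : ‖E‖ ≤ ‖F‖ := by
    rw [hE, hF, hME.norm_tprod, hMF.norm_tprod]
    refine le_of_tendsto_of_tendsto'
      hME.norm.hasProd hMF.norm.hasProd ?_
    intro s
    apply Finset.prod_le_prod (fun i _ => norm_nonneg _)
    intro i _
    have hrhs : ‖1 + (q : ℂ) * (q : ℂ) ^ i‖ = 1 + q * q ^ i := by
      have : (1 : ℂ) + (q : ℂ) * (q : ℂ) ^ i = ((1 + q * q ^ i : ℝ) : ℂ) := by push_cast; ring
      rw [this, Complex.norm_real, Real.norm_eq_abs, abs_of_nonneg (by positivity)]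
    rw [hrhs]
    calc ‖1 + w * (q : ℂ) ^ i‖
        ≤ ‖1‖ + ‖w * (q : ℂ) ^ i‖ := norm_add_le _ _
      _ = 1 + q * q ^ i := by rw [norm_one, norm_mul, habsw, abs_pow_q hq0.le]
  have hFpos : 0 < ‖F‖ := norm_pos_iff.mpr hFne
  have hsimp : (1 : ℝ) / 1 * (‖E‖ / ‖F‖) = ‖E‖ / ‖F‖ := by
    norm_num
  rw [hsimp, div_le_one hFpos]
  exact hkey
end
end

section
/- Let ε > 0 and η ∈ ℝ. Then Σ_{k ∈ ℤ} e^{−εk²/2 + ηk} = (e^{η²/(2ε)}/√ε) · Σ_{x ∈ √ε ℤ − η/√ε} e^{−x²/2} √ε, and consequently as ε ↓ 0 (with η = η(ε) possibly depending on ε but with η/√ε ∈ ℝ), ϑ₃(e^η; e^{−ε}) = √(2π/ε) · e^{η²/(2ε)} · (1 + O(√ε)), where ϑ₃(ζ;q) = Σ_{k∈ℤ} q^{k²/2} ζ^k. -/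
noncomputable section

open Real in
lemma aux_summable_exp_neg_sq {c : ℝ} (hc : 0 < c) :
    Summable fun n : ℤ => Real.exp (-c * (n : ℝ) ^ 2) := by
  have hr : Real.exp (-c) < 1 := Real.exp_lt_one_iff.2 (by linarith)
  have hgeom : Summable fun n : ℤ => Real.exp (-c) ^ n.natAbs := by
    apply Summable.of_nat_of_neg
    · simpa using summable_geometric_of_lt_one (Real.exp_pos _).le hr
    · simpa using summable_geometric_of_lt_one (Real.exp_pos _).le hr
  refine Summable.of_nonneg_of_le (fun n => (Real.exp_pos _).le) (fun n => ?_) hgeom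
  rw [← Real.exp_nat_mul]
  apply Real.exp_le_exp.2
  have h1 : (n.natAbs : ℝ) ≤ (n : ℝ) ^ 2 := by
    have h2 : ((n.natAbs : ℝ)) ^ 2 = (n : ℝ) ^ 2 := by
      push_cast [Nat.cast_natAbs]
      simp [sq_abs]
    nlinarith [Nat.le_self_pow two_ne_zero n.natAbs,
      (by exact_mod_cast Nat.le_self_pow two_ne_zero n.natAbs : (n.natAbs:ℝ) ≤ (n.natAbs:ℝ)^2)]
  nlinarith

lemma aux_theta3_eq (ε η : ℝ) :
    theta3 (Real.exp η) (Real.exp (-ε)) = ∑' k : ℤ, Real.exp (-ε * (k:ℝ)^2/2 + η * k) := by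
  unfold theta3
  refine tsum_congr fun k => ?_
  rw [← Real.rpow_intCast (Real.exp η) k, ← Real.exp_mul, ← Real.exp_mul, ← Real.exp_add]
  ring_nf

open Real Complex in
lemma aux_part2 {ε : ℝ} (hε : 0 < ε) (hε1 : ε ≤ 1) (η : ℝ) :
    |theta3 (Real.exp η) (Real.exp (-ε)) /
        (Real.sqrt (2 * Real.pi / ε) * Real.exp (η ^ 2 / (2 * ε))) - 1| ≤
      (Real.exp 2 * ∑' n : ℤ, Real.exp (-2 * (n : ℝ) ^ 2)) * Real.sqrt ε := by
  have hπ := Real.pi_pos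
  set q : ℝ := η ^ 2 / (2 * ε) with hq
  set A : ℝ := ε / (2 * Real.pi) with hA
  have hApos : 0 < A := by positivity
  set B : ℝ := η / (2 * Real.pi) with hB
  set f : ℤ → ℂ := fun n => Complex.exp (-(π : ℂ) / A * (n + Complex.I * B) ^ 2) with hf
  have hπc : (π : ℂ) ≠ 0 := Complex.ofReal_ne_zero.2 hπ.ne'
  have hεc : (ε : ℂ) ≠ 0 := Complex.ofReal_ne_zero.2 hε.ne'
  have hP := Complex.tsum_exp_neg_quadratic (a := (A : ℂ)) (by simpa using hApos) (B : ℂ)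
  have hL : (∑' n : ℤ, Complex.exp (-(π:ℂ) * A * n ^ 2 + 2 * π * B * n))
      = ((theta3 (Real.exp η) (Real.exp (-ε)) : ℝ) : ℂ) := by
    rw [aux_theta3_eq, Complex.ofReal_tsum]
    refine tsum_congr fun n => ?_
    rw [Complex.ofReal_exp]
    congr 1
    rw [hA, hB]
    push_cast
    field_simp
  have hA2 : ((A : ℂ)) ^ (1/2 : ℂ) = ((Real.sqrt A : ℝ) : ℂ) := by
    rw [Real.sqrt_eq_rpow, Complex.ofReal_cpow hApos.le]
    norm_num
  have harg : ∀ n : ℤ, (-(π:ℂ) / A * ((n : ℂ) + Complex.I * B) ^ 2)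
      = ((q - 2*π^2*(n:ℝ)^2/ε : ℝ) : ℂ) + ((-(2*π*η/ε)*(n:ℝ) : ℝ) : ℂ) * Complex.I := by
    intro n
    rw [hq, hA, hB]
    push_cast
    field_simp
    linear_combination (-(η:ℂ)^2) * Complex.I_sq
  have hnorm : ∀ n : ℤ, ‖f n‖ = Real.exp q * Real.exp (-(2*π^2/ε) * (n:ℝ)^2) := by
    intro n
    rw [hf]
    simp only
    rw [harg n, Complex.norm_exp]
    have hre : (((q - 2*π^2*(n:ℝ)^2/ε : ℝ) : ℂ) + ((-(2*π*η/ε)*(n:ℝ) : ℝ) : ℂ) * Complex.I).re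
        = q - 2*π^2*(n:ℝ)^2/ε := by
      simp only [Complex.add_re, Complex.ofReal_re, Complex.mul_re, Complex.I_re,
        Complex.I_im, Complex.ofReal_im, mul_zero, zero_mul, mul_one, sub_zero, zero_sub]
      ring
    rw [hre, ← Real.exp_add]
    congr 1
    ring
  have hsum_g : Summable (fun n : ℤ => Real.exp (-(2*π^2/ε) * (n:ℝ)^2)) :=
    aux_summable_exp_neg_sq (by positivity)
  have hsum_f : Summable f :=
    Summable.of_norm (((hsum_g.mul_left (Real.exp q))).congr fun n => (hnorm n).symm)
  have hf0 : f 0 = ((Real.exp q : ℝ) : ℂ) := by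
    have h := harg 0
    rw [hf]
    simp only [Int.cast_zero] at h ⊢
    rw [h]
    push_cast
    rw [← Complex.ofReal_exp]
    norm_num
  have hsplit := Summable.tsum_eq_add_tsum_ite hsum_f 0
  -- bound on each tail term
  have hexp1 : Real.exp (-(1/ε)) ≤ Real.sqrt ε := by
    have h2 : 1/ε ≤ Real.exp (1/ε) := by
      have := Real.add_one_le_exp (1/ε); linarith
    have h1 : Real.exp (-(1/ε)) ≤ ε := by
      rw [Real.exp_neg]
      calc (Real.exp (1/ε))⁻¹ ≤ (1/ε)⁻¹ := by
            apply inv_anti₀ (by positivity) h2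
        _ = ε := by simp
    have h3 : ε ≤ Real.sqrt ε := by
      nlinarith [Real.sq_sqrt hε.le, Real.sqrt_le_one.mpr hε1, Real.sqrt_nonneg ε]
    linarith
  have hbound : ∀ n : ℤ, ‖(if n = 0 then 0 else f n)‖ ≤
      Real.exp q * Real.sqrt ε * (Real.exp 2 * Real.exp (-2*(n:ℝ)^2)) := by
    intro n
    by_cases h : n = 0
    · rw [if_pos h, norm_zero]; positivity
    · rw [if_neg h, hnorm n]
      have h1 : 1 ≤ (n:ℝ)^2 := by
        have : (1:ℤ) ≤ |n| := Int.one_le_abs (by simpa using h)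
        have h2 : (1:ℝ) ≤ |(n:ℝ)| := by exact_mod_cast (by simpa using this : (1:ℤ) ≤ |n|)
        nlinarith [abs_nonneg (n:ℝ), _root_.sq_abs (n:ℝ)]
      have hπ1 : 1 ≤ π := by nlinarith [Real.pi_gt_three]
      have key : Real.exp (-(2*π^2/ε) * (n:ℝ)^2) ≤
          Real.exp (-(1/ε)) * (Real.exp 2 * Real.exp (-2*(n:ℝ)^2)) := by
        rw [← Real.exp_add, ← Real.exp_add]
        apply Real.exp_le_exp.2
        have hu1 : 1 ≤ 1/ε := by rw [le_div_iff₀ hε]; linarith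
        have hrw : 2*π^2/ε = 2*π^2*(1/ε) := by ring
        rw [hrw]
        nlinarith [mul_nonneg (by linarith : (0:ℝ) ≤ 1/ε - 1)
          (by nlinarith : (0:ℝ) ≤ 2*π^2*(n:ℝ)^2 - 1), h1, hπ1,
          mul_nonneg (by nlinarith : (0:ℝ) ≤ π^2 - 1) (sq_nonneg (n:ℝ))]
      calc Real.exp q * Real.exp (-(2*π^2/ε) * (n:ℝ)^2)
          ≤ Real.exp q * (Real.exp (-(1/ε)) * (Real.exp 2 * Real.exp (-2*(n:ℝ)^2))) := by
            apply mul_le_mul_of_nonneg_left key (Real.exp_pos q).le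
        _ ≤ Real.exp q * (Real.sqrt ε * (Real.exp 2 * Real.exp (-2*(n:ℝ)^2))) := by
            apply mul_le_mul_of_nonneg_left _ (Real.exp_pos q).le
            apply mul_le_mul_of_nonneg_right hexp1 (by positivity)
        _ = Real.exp q * Real.sqrt ε * (Real.exp 2 * Real.exp (-2*(n:ℝ)^2)) := by ring
  have hRHS : Summable (fun n : ℤ =>
      Real.exp q * Real.sqrt ε * (Real.exp 2 * Real.exp (-2*(n:ℝ)^2))) := by
    exact (((aux_summable_exp_neg_sq two_pos).congr (fun n => by norm_num)).mul_left
      (Real.exp 2)).mul_left _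
  have hnormsum : Summable (fun n : ℤ => ‖(if n = 0 then 0 else f n)‖) :=
    Summable.of_nonneg_of_le (fun n => norm_nonneg _) hbound hRHS
  set K : ℝ := Real.exp 2 * ∑' n : ℤ, Real.exp (-2 * (n:ℝ)^2) with hK
  have hKnonneg : 0 ≤ K := by
    rw [hK]
    apply mul_nonneg (Real.exp_pos 2).le
    exact tsum_nonneg fun n => (Real.exp_pos _).le
  have htail : ‖∑' n : ℤ, (if n = 0 then 0 else f n)‖ ≤ Real.exp q * Real.sqrt ε * K := by
    calc ‖∑' n : ℤ, (if n = 0 then 0 else f n)‖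
        ≤ ∑' n : ℤ, ‖(if n = 0 then 0 else f n)‖ := norm_tsum_le_tsum_norm hnormsum
      _ ≤ ∑' n : ℤ, Real.exp q * Real.sqrt ε * (Real.exp 2 * Real.exp (-2*(n:ℝ)^2)) :=
          Summable.tsum_le_tsum hbound hnormsum hRHS
      _ = Real.exp q * Real.sqrt ε * K := by
          rw [tsum_mul_left, tsum_mul_left, hK]
  have hmain : ((theta3 (Real.exp η) (Real.exp (-ε)) : ℝ) : ℂ)
      = ((Real.sqrt (2*π/ε) : ℝ) : ℂ) * ∑' n : ℤ, f n := by
    rw [← hL, hP, hA2]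
    congr 1
    rw [← Complex.ofReal_one, ← Complex.ofReal_div]
    congr 1
    rw [one_div, ← Real.sqrt_inv]
    congr 1
    rw [hA]
    field_simp
  set T : ℝ := theta3 (Real.exp η) (Real.exp (-ε)) with hT
  set D : ℝ := Real.sqrt (2*π/ε) * Real.exp q with hD
  have hsq : 0 < Real.sqrt (2*π/ε) := Real.sqrt_pos.2 (by positivity)
  have hDpos : 0 < D := by rw [hD]; positivity
  have hdiff : |T - D| ≤ D * (Real.sqrt ε * K) := by
    have hC : ((T - D : ℝ) : ℂ) = ((Real.sqrt (2*π/ε) : ℝ) : ℂ) *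
        ((∑' n : ℤ, f n) - ((Real.exp q : ℝ) : ℂ)) := by
      rw [mul_sub, ← hmain]
      push_cast [hD]
      ring
    have hS : (∑' n : ℤ, f n) - ((Real.exp q : ℝ) : ℂ)
        = ∑' n : ℤ, (if n = 0 then 0 else f n) := by
      rw [hsplit, hf0]; ring
    have : |T - D| = ‖((T - D : ℝ) : ℂ)‖ := by
      rw [Complex.norm_real, Real.norm_eq_abs]
    rw [this, hC, hS, norm_mul, Complex.norm_real, Real.norm_eq_abs,
      abs_of_pos hsq]
    calc Real.sqrt (2*π/ε) * ‖∑' n : ℤ, (if n = 0 then 0 else f n)‖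
        ≤ Real.sqrt (2*π/ε) * (Real.exp q * Real.sqrt ε * K) := by
          apply mul_le_mul_of_nonneg_left htail hsq.le
      _ = D * (Real.sqrt ε * K) := by rw [hD]; ring
  have hfinal : |T / D - 1| = |T - D| / D := by
    have h1 : T / D - 1 = (T - D) / D := by field_simp
    rw [h1, abs_div, abs_of_pos hDpos]
  rw [hfinal, div_le_iff₀ hDpos]
  calc |T - D| ≤ D * (Real.sqrt ε * K) := hdiff
    _ = K * Real.sqrt ε * D := by ring

lemma aux_part1 (ε : ℝ) (hε : 0 < ε) (η : ℝ) :
    (∑' k : ℤ, Real.exp (-ε * (k : ℝ) ^ 2 / 2 + η * k)) =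
      Real.exp (η ^ 2 / (2 * ε)) / Real.sqrt ε *
        ∑' k : ℤ, Real.exp (-(Real.sqrt ε * k - η / Real.sqrt ε) ^ 2 / 2) * Real.sqrt ε := by
  rw [← tsum_mul_left]
  refine tsum_congr fun k => ?_
  have hs : Real.sqrt ε ≠ 0 := (Real.sqrt_pos.2 hε).ne'
  have hsq : Real.sqrt ε ^ 2 = ε := Real.sq_sqrt hε.le
  have hexpand : (Real.sqrt ε * k - η / Real.sqrt ε) ^ 2 = ε * k ^ 2 - 2 * (η * k) + η ^ 2 / ε := by
    rw [sub_sq, mul_pow, hsq, div_pow, hsq]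
    rw [show 2 * (Real.sqrt ε * (k:ℝ)) * (η / Real.sqrt ε)
      = 2 * (η * (k:ℝ)) * (Real.sqrt ε / Real.sqrt ε) by ring, div_self hs]
    ring
  rw [show Real.exp (η ^ 2 / (2 * ε)) / Real.sqrt ε *
        (Real.exp (-(Real.sqrt ε * k - η / Real.sqrt ε) ^ 2 / 2) * Real.sqrt ε)
      = Real.exp (η ^ 2 / (2 * ε)) * Real.exp (-(Real.sqrt ε * k - η / Real.sqrt ε) ^ 2 / 2) *
        (Real.sqrt ε / Real.sqrt ε) by ring, div_self hs, mul_one, ← Real.exp_add, hexpand]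
  congr 1
  field_simp
  ring

/-- Gaussian summation asymptotics for the theta function: the exact completed-square
identity `Σ_{k∈ℤ} e^{−εk²/2+ηk} = (e^{η²/(2ε)}/√ε) Σ_{k∈ℤ} e^{−(√ε k − η/√ε)²/2} √ε`, and
the consequence `ϑ₃(e^η; e^{−ε}) = √(2π/ε) e^{η²/(2ε)} (1 + O(√ε))` as `ε ↓ 0`,
uniformly in `η`. -/
theorem stmt19 :
    (∀ ε : ℝ, 0 < ε → ∀ η : ℝ,
      (∑' k : ℤ, Real.exp (-ε * (k : ℝ) ^ 2 / 2 + η * k)) =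
        Real.exp (η ^ 2 / (2 * ε)) / Real.sqrt ε *
          ∑' k : ℤ, Real.exp (-(Real.sqrt ε * k - η / Real.sqrt ε) ^ 2 / 2) * Real.sqrt ε) ∧
    (∃ C : ℝ, 0 < C ∧ ∀ ε ∈ Set.Ioc (0:ℝ) 1, ∀ η : ℝ,
      |theta3 (Real.exp η) (Real.exp (-ε)) /
          (Real.sqrt (2 * Real.pi / ε) * Real.exp (η ^ 2 / (2 * ε))) - 1| ≤
        C * Real.sqrt ε) := by
  constructor
  · exact aux_part1
  · refine ⟨Real.exp 2 * (∑' n : ℤ, Real.exp (-2 * (n : ℝ) ^ 2)) + 1, ?_, ?_⟩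
    · have h0 : 0 ≤ ∑' n : ℤ, Real.exp (-2 * (n : ℝ) ^ 2) :=
        tsum_nonneg fun n => (Real.exp_pos _).le
      positivity
    · rintro ε ⟨hε, hε1⟩ η
      refine (aux_part2 hε hε1 η).trans ?_
      have h0 : 0 ≤ ∑' n : ℤ, Real.exp (-2 * (n : ℝ) ^ 2) :=
        tsum_nonneg fun n => (Real.exp_pos _).le
      have := Real.sqrt_nonneg ε
      nlinarith
end
end
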